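/- arXiv:1507.05343 — 9 statements merged into one kernel-verified Lean document; each statement's English description precedes it below -/
import Mathlib

section
/- Let μ be a compactly supported probability measure on ℝ whose free cumulants satisfy κ₁ = 0, κ₂ = γν, and κ_l = a^l γ^{l-1} for all l ≥ 3, where a ≥ 0, ν > 0, γ > 0. Then every moment ∫ x^l dμ(x) is non-negative, and consequently max supp(μ) ≥ -min supp(μ). -/
open MeasureTheory

/-- A non-crossing partition of `{0, ..., l-1}`, encoded as a finite set of blocks:
blocks are nonempty, pairwise disjoint, cover everything, and are non-crossing. -/
def IsNCPartition (l : ℕ) (P : Finset (Finset (Fin l))) : Prop :=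
  (∀ S ∈ P, S.Nonempty) ∧
  (∀ S ∈ P, ∀ T ∈ P, S ≠ T → Disjoint S T) ∧
  (P.biUnion id = Finset.univ) ∧
  (∀ a b c d : Fin l, a < b → b < c → c < d →
    ∀ S ∈ P, ∀ T ∈ P, a ∈ S → c ∈ S → b ∈ T → d ∈ T → S = T)

open scoped Classical in
theorem stmt0 (μ : Measure ℝ) [IsProbabilityMeasure μ]
    (hcomp : ∃ K : Set ℝ, IsCompact K ∧ μ Kᶜ = 0)
    (a ν γ : ℝ) (ha : 0 ≤ a) (hν : 0 < ν) (hγ : 0 < γ)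
    (κ : ℕ → ℝ) (hκ1 : κ 1 = 0) (hκ2 : κ 2 = γ * ν)
    (hκ : ∀ l : ℕ, 3 ≤ l → κ l = a ^ l * γ ^ (l - 1))
    (hmom : ∀ l : ℕ,
      ∫ x, x ^ l ∂μ =
        ∑ P ∈ Finset.univ.filter (IsNCPartition l), ∏ S ∈ P, κ S.card) :
    (∀ l : ℕ, 0 ≤ ∫ x, x ^ l ∂μ) ∧
      -sInf {x : ℝ | ∀ ε > 0, 0 < μ (Set.Ioo (x - ε) (x + ε))} ≤
        sSup {x : ℝ | ∀ ε > 0, 0 < μ (Set.Ioo (x - ε) (x + ε))} := by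
  -- κ is nonnegative on positive arguments
  have hκnn : ∀ n : ℕ, 1 ≤ n → 0 ≤ κ n := by
    intro n hn
    match n, hn with
    | 1, _ => rw [hκ1]
    | 2, _ => rw [hκ2]; positivity
    | (n+3), _ => rw [hκ (n+3) (by omega)]; positivity
  -- Part 1: all moments are nonnegative
  have h1 : ∀ l : ℕ, 0 ≤ ∫ x, x ^ l ∂μ := by
    intro l
    rw [hmom l]
    apply Finset.sum_nonneg
    intro P hP
    have hPnc : IsNCPartition l P := (Finset.mem_filter.1 hP).2
    apply Finset.prod_nonneg
    intro S hS
    exact hκnn S.card (Finset.card_pos.2 (hPnc.1 S hS))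
  refine ⟨h1, ?_⟩
  set S : Set ℝ := {x : ℝ | ∀ ε > 0, 0 < μ (Set.Ioo (x - ε) (x + ε))} with hSdef
  -- complement characterization
  have hcompl : ∀ x ∈ Sᶜ, ∃ ε : ℝ, 0 < ε ∧ μ (Set.Ioo (x - ε) (x + ε)) = 0 := by
    intro x hx
    by_contra h
    push_neg at h
    exact hx fun ε hε => pos_iff_ne_zero.2 (h ε hε)
  -- the complement of S is null
  have hnull : μ Sᶜ = 0 := by
    have hU : ∀ x : ℝ, ∃ ε : ℝ, x ∈ Sᶜ → 0 < ε ∧ μ (Set.Ioo (x - ε) (x + ε)) = 0 := by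
      intro x
      by_cases hx : x ∈ Sᶜ
      · obtain ⟨ε, hε⟩ := hcompl x hx
        exact ⟨ε, fun _ => hε⟩
      · exact ⟨1, fun h => absurd h hx⟩
    choose ε hε using hU
    set f : ↥Sᶜ → Set ℝ := fun i => Set.Ioo (i.1 - ε i.1) (i.1 + ε i.1) with hf
    obtain ⟨T, hTc, hTU⟩ :=
      TopologicalSpace.isOpen_iUnion_countable f (fun i => isOpen_Ioo)
    have hcover : Sᶜ ⊆ ⋃ i, f i := by
      intro x hx
      refine Set.mem_iUnion.2 ⟨⟨x, hx⟩, ?_⟩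
      have := (hε x hx).1
      simp only [hf, Set.mem_Ioo]
      constructor <;> linarith
    refine measure_mono_null hcover ?_
    rw [← hTU]
    exact (measure_biUnion_null_iff hTc).2 fun i _ => (hε i.1 i.2).2
  -- S is closed
  have hclosed : IsClosed S := by
    rw [← isOpen_compl_iff, Metric.isOpen_iff]
    intro x hx
    obtain ⟨ε, hε, hεnull⟩ := hcompl x hx
    refine ⟨ε / 2, by linarith, ?_⟩
    intro y hy
    rw [Metric.mem_ball, Real.dist_eq, abs_sub_lt_iff] at hy
    intro hyS
    have hpos := hyS (ε / 2) (by linarith)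
    have hsub : Set.Ioo (y - ε / 2) (y + ε / 2) ⊆ Set.Ioo (x - ε) (x + ε) := by
      intro z hz
      obtain ⟨hz1, hz2⟩ := hz
      constructor <;> [linarith [hy.1, hy.2]; linarith [hy.1, hy.2]]
    have := measure_mono_null hsub hεnull
    exact absurd this hpos.ne'
  -- S is bounded
  obtain ⟨K, hK, hKc⟩ := hcomp
  obtain ⟨r, hr⟩ := hK.isBounded.subset_closedBall 0
  set R : ℝ := max r 0 + 1 with hRdef
  have hRS : S ⊆ Set.Icc (-R) R := by
    intro x hx
    by_contra hxR
    have hcase : R < x ∨ x < -R := by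
      by_contra h
      push_neg at h
      exact hxR ⟨h.2, h.1⟩
    have h1' : μ (Set.Ioo (x - 1) (x + 1)) = 0 := by
      refine measure_mono_null ?_ hKc
      intro y hy hyK
      have hyb := hr hyK
      rw [Metric.mem_closedBall, Real.dist_eq, sub_zero] at hyb
      rw [abs_le] at hyb
      obtain ⟨hy1, hy2⟩ := hy
      have hrm : r ≤ max r 0 := le_max_left r 0
      rcases hcase with h | h
      · linarith
      · linarith
    exact absurd h1' (hx 1 one_pos).ne'
  -- S is nonempty
  have hne : S.Nonempty := by
    by_contra h
    rw [Set.not_nonempty_iff_eq_empty] at h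
    rw [h, Set.compl_empty, measure_univ] at hnull
    exact one_ne_zero hnull
  have hbdd_above : BddAbove S := ⟨R, fun x hx => (hRS hx).2⟩
  have hbdd_below : BddBelow S := ⟨-R, fun x hx => (hRS hx).1⟩
  set m : ℝ := sInf S with hm
  set M : ℝ := sSup S with hM
  by_contra hcon
  push_neg at hcon
  have hmM : m ≤ M := csInf_le_csSup hne hbdd_below hbdd_above
  set M' : ℝ := max M 0 with hM'
  have hM'nn : 0 ≤ M' := le_max_right M 0
  have hM'lt : M' < -m := max_lt hcon (by linarith)
  set δ : ℝ := (-m - M') / 2 with hδdef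
  have hδ : 0 < δ := by simp only [hδdef]; linarith
  set b : ℝ := -(m + δ) with hb
  have hbM' : M' < b := by simp only [hb, hδdef]; linarith
  have hb0 : 0 < b := lt_of_le_of_lt hM'nn hbM'
  have hmS : m ∈ S := hclosed.csInf_mem hne hbdd_below
  have hpos : 0 < μ (Set.Iic (m + δ)) := by
    refine lt_of_lt_of_le (hmS δ hδ) (measure_mono ?_)
    intro z hz
    exact le_of_lt hz.2
  set c : ℝ := (μ (Set.Iic (m + δ))).toReal with hc
  have hc0 : 0 < c := ENNReal.toReal_pos hpos.ne' (measure_ne_top μ _)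
  -- choose a large odd power
  obtain ⟨n, hn⟩ := exists_pow_lt_of_lt_one hc0 ((div_lt_one hb0).2 hbM')
  set l : ℕ := 2 * n + 1 with hl
  have hlodd : Odd l := ⟨n, by omega⟩
  have hratio : (M' / b) ^ l < c :=
    lt_of_le_of_lt
      (pow_le_pow_of_le_one (div_nonneg hM'nn hb0.le) ((div_le_one hb0).2 hbM'.le) (by omega)) hn
  have hM'l : M' ^ l < c * b ^ l := by
    rw [div_pow, div_lt_iff₀ (pow_pos hb0 l)] at hratio
    linarith
  -- a.e. membership in S
  have hae : ∀ᵐ x ∂μ, x ∈ S := by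
    rw [ae_iff]
    exact hnull
  have hR0 : 0 ≤ R := by
    have := hRS hmS
    linarith [this.1, this.2]
  -- integrability of the moment function
  have hint_x : Integrable (fun x => x ^ l) μ := by
    refine Integrable.mono' (integrable_const (R ^ l))
      ((measurable_id.pow_const l).aestronglyMeasurable) ?_
    filter_upwards [hae] with x hx
    have hxI := hRS hx
    rw [Real.norm_eq_abs, abs_pow]
    exact pow_le_pow_left₀ (abs_nonneg x) (abs_le.2 ⟨hxI.1, hxI.2⟩) l
  -- the comparison step function
  set g : ℝ → ℝ := fun x => if x ≤ m + δ then (m + δ) ^ l else M' ^ l with hg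
  have hg_eq : g = (Set.Iic (m + δ)).indicator (fun _ => (m + δ) ^ l) +
      (Set.Ioi (m + δ)).indicator (fun _ => M' ^ l) := by
    funext x
    by_cases hx : x ≤ m + δ
    · simp [hg, Set.indicator_apply, hx, not_lt.2 hx]
    · simp [hg, Set.indicator_apply, hx, not_le.1 hx]
  have hint1 : Integrable ((Set.Iic (m + δ)).indicator (fun _ => ((m + δ) ^ l : ℝ))) μ :=
    (integrable_const _).indicator measurableSet_Iic
  have hint2 : Integrable ((Set.Ioi (m + δ)).indicator (fun _ => (M' ^ l : ℝ))) μ :=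
    (integrable_const _).indicator measurableSet_Ioi
  have hint_g : Integrable g μ := by
    rw [hg_eq]; exact hint1.add hint2
  have hle : ∫ x, x ^ l ∂μ ≤ ∫ x, g x ∂μ := by
    refine integral_mono_ae hint_x hint_g ?_
    filter_upwards [hae] with x hx
    by_cases hxm : x ≤ m + δ
    · simp only [hg, if_pos hxm]
      exact hlodd.strictMono_pow.monotone hxm
    · simp only [hg, if_neg hxm]
      have hxM : x ≤ M' := le_trans (le_csSup hbdd_above hx) (le_max_left M 0)
      exact hlodd.strictMono_pow.monotone hxM
  have hgval : ∫ x, g x ∂μ =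
      c * (m + δ) ^ l + (μ (Set.Ioi (m + δ))).toReal * M' ^ l := by
    rw [hg_eq]
    simp only [Pi.add_apply]
    rw [integral_add hint1 hint2, integral_indicator_const _ measurableSet_Iic,
      integral_indicator_const _ measurableSet_Ioi]
    simp [smul_eq_mul, hc, Measure.real]
  have hIoi1 : (μ (Set.Ioi (m + δ))).toReal ≤ 1 := by
    rw [← ENNReal.toReal_one]
    exact ENNReal.toReal_mono ENNReal.one_ne_top (prob_le_one)
  have hIoi0 : 0 ≤ (μ (Set.Ioi (m + δ))).toReal := ENNReal.toReal_nonneg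
  have hneg : (m + δ) ^ l = -(b ^ l) := by
    have : m + δ = -b := by simp [hb]
    rw [this, hlodd.neg_pow]
  have hfin : ∫ x, x ^ l ∂μ < 0 := by
    have hbl : 0 < b ^ l := pow_pos hb0 l
    have hM'lnn : 0 ≤ M' ^ l := pow_nonneg hM'nn l
    calc ∫ x, x ^ l ∂μ ≤ c * (m + δ) ^ l + (μ (Set.Ioi (m + δ))).toReal * M' ^ l := by
          rw [← hgval]; exact hle
      _ ≤ -(c * b ^ l) + M' ^ l := by
          rw [hneg]
          nlinarith
      _ < 0 := by linarith
  linarith [h1 l]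
end

section
/- Let z_1,...,z_n be i.i.d. random variables with E[z_j] = 0, E[z_j²] = 1, and finite absolute moments of all orders. Let p_1,...,p_d be polynomials with E[p_i(z_1)] = 0 for each i. Then for every α, β > 0 and all sufficiently large n, P[ n^{−d/2} |Σ_{j_1 ≠ j_2 ≠ ... ≠ j_d, 1 ≤ j_s ≤ n} Π_{i=1}^d p_i(z_{j_i})| > n^α ] < n^{−β}, where the sum is over tuples of pairwise distinct indices. -/
open MeasureTheory ProbabilityTheory Finset

set_option linter.unusedSectionVars false
set_option linter.unusedVariables false
set_option maxHeartbeats 1000000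

section AuxStmt2

variable {Ω : Type*} [MeasureSpace Ω] [IsProbabilityMeasure (ℙ : Measure Ω)]

lemma aux_indep_prod {X : ℕ → Ω → ℝ} (hX : iIndepFun X ℙ)
    (hm : ∀ j, Measurable (X j)) (hi : ∀ j, Integrable (X j) ℙ) (s : Finset ℕ) :
    Integrable (fun ω => ∏ j ∈ s, X j ω) ℙ ∧
      (∫ ω, ∏ j ∈ s, X j ω) = ∏ j ∈ s, ∫ ω, X j ω := by
  classical
  induction s using Finset.induction with
  | empty => simp
  | @insert a s ha ih =>
    have hprodfn : (fun ω => ∏ j ∈ s, X j ω) = ∏ j ∈ s, X j := by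
      ext ω; simp
    have hind : IndepFun (∏ j ∈ s, X j) (X a) ℙ :=
      hX.indepFun_finsetProd_of_notMem hm ha
    have hind' : IndepFun (fun ω => ∏ j ∈ s, X j ω) (X a) ℙ := by rw [hprodfn]; exact hind
    have hint : Integrable (fun ω => (∏ j ∈ s, X j ω) * X a ω) ℙ :=
      hind'.integrable_mul ih.1 (hi a)
    constructor
    · have : (fun ω => ∏ j ∈ insert a s, X j ω)
          = fun ω => (∏ j ∈ s, X j ω) * X a ω := by
        ext ω; rw [Finset.prod_insert ha, mul_comm]
      rw [this]; exact hint
    · have h1 : (∫ ω, ∏ j ∈ insert a s, X j ω) = ∫ ω, (∏ j ∈ s, X j ω) * X a ω := by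
        congr 1; ext ω; rw [Finset.prod_insert ha, mul_comm]
      have h2 : (∫ ω, (∏ j ∈ s, X j ω) * X a ω)
          = (∫ ω, ∏ j ∈ s, X j ω) * ∫ ω, X a ω :=
        hind'.integral_mul_eq_mul_integral ih.1.aestronglyMeasurable (hi a).aestronglyMeasurable
      rw [h1, h2, Finset.prod_insert ha, ih.2, mul_comm]

lemma aux_poly_int {z0 : Ω → ℝ} (hz : Measurable z0)
    (hmom : ∀ k : ℕ, Integrable (fun ω => |z0 ω| ^ k) ℙ) (q : Polynomial ℝ) :
    Integrable (fun ω => q.eval (z0 ω)) ℙ := by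
  induction q using Polynomial.induction_on' with
  | add p q hp hq => simp only [Polynomial.eval_add]; exact hp.add hq
  | monomial k a =>
    simp only [Polynomial.eval_monomial]
    have h1 : Integrable (fun ω => z0 ω ^ k) ℙ := by
      refine (hmom k).mono' ((hz.pow_const k).aestronglyMeasurable) ?_
      filter_upwards with ω
      rw [Real.norm_eq_abs, abs_pow]
    exact h1.const_mul a




lemma aux_transfer {z : ℕ → Ω → ℝ} (hmeas : ∀ j, Measurable (z j))
    (hident : ∀ j, Measure.map (z j) ℙ = Measure.map (z 0) ℙ)
    (hmom : ∀ k : ℕ, Integrable (fun ω => |z 0 ω| ^ k) ℙ) (q : Polynomial ℝ) (j : ℕ) :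
    Integrable (fun ω => q.eval (z j ω)) ℙ ∧
      (∫ ω, q.eval (z j ω)) = ∫ ω, q.eval (z 0 ω) := by
  have hqm : Measurable (fun x : ℝ => q.eval x) := by
    exact (Polynomial.continuous q).measurable
  have key : ∀ i : ℕ, Integrable (fun ω => q.eval (z i ω)) ℙ
      ↔ Integrable (fun x => q.eval x) (Measure.map (z 0) ℙ) := by
    intro i
    rw [← hident i]
    exact (integrable_map_measure (hqm.aestronglyMeasurable) (hmeas i).aemeasurable).symm
  have keyI : ∀ i : ℕ, (∫ ω, q.eval (z i ω)) = ∫ x, q.eval x ∂(Measure.map (z 0) ℙ) := by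
    intro i
    rw [← hident i]
    exact (integral_map (hmeas i).aemeasurable hqm.aestronglyMeasurable).symm
  have h0 : Integrable (fun ω => q.eval (z 0 ω)) ℙ := aux_poly_int (hmeas 0) hmom q
  exact ⟨(key j).mpr ((key 0).mp h0), (keyI j).trans (keyI 0).symm⟩

noncomputable def Kconst (z0 : Ω → ℝ) (d : ℕ) (p : Fin d → Polynomial ℝ) (L : ℕ) : ℝ :=
  1 + ∑ c ∈ Fintype.piFinset (fun _ : Fin d => Finset.range (L+1)),
      |∫ ω, (∏ i, p i ^ c i).eval (z0 ω)|

lemma Kconst_one_le (z0 : Ω → ℝ) (d : ℕ) (p : Fin d → Polynomial ℝ) (L : ℕ) :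
    1 ≤ Kconst z0 d p L := by
  have : 0 ≤ ∑ c ∈ Fintype.piFinset (fun _ : Fin d => Finset.range (L+1)),
      |∫ ω, (∏ i, p i ^ c i).eval (z0 ω)| :=
    Finset.sum_nonneg fun _ _ => abs_nonneg _
  unfold Kconst; linarith

lemma Kconst_bound (z0 : Ω → ℝ) (d : ℕ) (p : Fin d → Polynomial ℝ) (L : ℕ)
    (c : Fin d → ℕ) (hc : ∀ i, c i ≤ L) :
    |∫ ω, (∏ i, p i ^ c i).eval (z0 ω)| ≤ Kconst z0 d p L := by
  have hmem : c ∈ Fintype.piFinset (fun _ : Fin d => Finset.range (L+1)) := by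
    simp only [Fintype.mem_piFinset, Finset.mem_range]
    exact fun i => Nat.lt_succ_of_le (hc i)
  have := Finset.single_le_sum
    (f := fun c : Fin d → ℕ => |∫ ω, (∏ i, p i ^ c i).eval (z0 ω)|)
    (fun _ _ => abs_nonneg _) hmem
  unfold Kconst; linarith

lemma moment_bound (z : ℕ → Ω → ℝ) (hmeas : ∀ j, Measurable (z j))
    (hindep : iIndepFun z ℙ)
    (hident : ∀ j, Measure.map (z j) ℙ = Measure.map (z 0) ℙ)
    (hmom : ∀ k : ℕ, Integrable (fun ω => |z 0 ω| ^ k) ℙ)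
    (d : ℕ) (p : Fin d → Polynomial ℝ)
    (hp : ∀ i, (∫ ω, (p i).eval (z 0 ω)) = 0)
    (m n : ℕ) (hn : m * d ≤ n) :
    Integrable (fun ω =>
      (∑ f ∈ Finset.univ.filter (fun f : Fin d → Fin n => Function.Injective f),
        ∏ i, (p i).eval (z (f i) ω)) ^ (2*m)) ℙ ∧
    (∫ ω, (∑ f ∈ Finset.univ.filter (fun f : Fin d → Fin n => Function.Injective f),
        ∏ i, (p i).eval (z (f i) ω)) ^ (2*m))
      ≤ ((m*d : ℝ))^(d*(2*m)) * (Kconst (z 0) d p (2*m*d))^(2*m*d) * (n:ℝ)^(m*d) := by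
  classical
  set L := 2*m with hL
  set K := Kconst (z 0) d p (L*d) with hK
  set I : Finset (Fin d → Fin n) := Finset.univ.filter (fun f => Function.Injective f) with hI
  set P : Finset (Fin L → Fin d → Fin n) := Fintype.piFinset (fun _ => I) with hP
  -- fibers
  set fib : (Fin L → Fin d → Fin n) → Fin n → Finset (Fin L × Fin d) :=
    fun g j => Finset.univ.filter (fun ki => g ki.1 ki.2 = j) with hfib
  set Q : (Fin L → Fin d → Fin n) → Fin n → Polynomial ℝ :=
    fun g j => ∏ ki ∈ fib g j, p ki.2 with hQ
  set val : (Fin L → Fin d → Fin n) → Fin n → ℝ :=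
    fun g j => ∫ ω, (Q g j).eval (z 0 ω) with hval
  -- pointwise expansion
  have expand : ∀ ω, (∑ f ∈ I, ∏ i, (p i).eval (z (f i) ω)) ^ L
      = ∑ g ∈ P, ∏ k : Fin L, ∏ i, (p i).eval (z (g k i) ω) := by
    intro ω
    have h1 : (∑ f ∈ I, ∏ i, (p i).eval (z (f i) ω)) ^ L
        = ∏ _k : Fin L, ∑ f ∈ I, ∏ i, (p i).eval (z (f i) ω) := by
      rw [Finset.prod_const, Finset.card_univ, Fintype.card_fin]
    rw [h1, Finset.prod_univ_sum]
  -- grouping by fibers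
  have group : ∀ g (ω : Ω), (∏ k : Fin L, ∏ i, (p i).eval (z (g k i) ω))
      = ∏ j : Fin n, (Q g j).eval (z (j : ℕ) ω) := by
    intro g ω
    have h1 : (∏ k : Fin L, ∏ i, (p i).eval (z (g k i) ω))
        = ∏ ki : Fin L × Fin d, (p ki.2).eval (z (g ki.1 ki.2) ω) :=
      (Fintype.prod_prod_type (f := fun ki : Fin L × Fin d => (p ki.2).eval (z (g ki.1 ki.2) ω))).symm
    rw [h1, ← Finset.prod_fiberwise Finset.univ (fun ki : Fin L × Fin d => g ki.1 ki.2)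
      (fun ki => (p ki.2).eval (z (g ki.1 ki.2) ω))]
    refine Finset.prod_congr rfl fun j _ => ?_
    have h2 : (Q g j).eval (z (j:ℕ) ω) = ∏ ki ∈ fib g j, (p ki.2).eval (z (j:ℕ) ω) := by
      rw [hQ]; exact Polynomial.eval_prod _ _ _
    rw [h2]
    refine Finset.prod_congr rfl fun ki hki => ?_
    have : g ki.1 ki.2 = j := (Finset.mem_filter.mp hki).2
    rw [this]
  -- per-term integrability and value
  have hterm : ∀ g, Integrable (fun ω => ∏ k : Fin L, ∏ i, (p i).eval (z (g k i) ω)) ℙ ∧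
      (∫ ω, ∏ k : Fin L, ∏ i, (p i).eval (z (g k i) ω)) = ∏ j : Fin n, val g j := by
    intro g
    set Qn : ℕ → Polynomial ℝ := fun j => if h : j < n then Q g ⟨j, h⟩ else 1 with hQn
    set X : ℕ → Ω → ℝ := fun j ω => (Qn j).eval (z j ω) with hX
    have hXindep : iIndepFun X ℙ :=
      hindep.comp (fun j x => (Qn j).eval x) (fun j => (Polynomial.continuous _).measurable)
    have hXm : ∀ j, Measurable (X j) :=
      fun j => ((Polynomial.continuous (Qn j)).measurable).comp (hmeas j)
    have hXi : ∀ j, Integrable (X j) ℙ :=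
      fun j => (aux_transfer hmeas hident hmom (Qn j) j).1
    obtain ⟨hint, hvaleq⟩ := aux_indep_prod hXindep hXm hXi (Finset.range n)
    have hfe : ∀ ω, (∏ k : Fin L, ∏ i, (p i).eval (z (g k i) ω))
        = ∏ j ∈ Finset.range n, X j ω := by
      intro ω
      rw [group g ω, Finset.prod_range (fun j => X j ω)]
      refine Finset.prod_congr rfl fun j _ => ?_
      simp only [hX, hQn]
      rw [dif_pos j.isLt, Fin.eta]
    constructor
    · rw [show (fun ω => ∏ k : Fin L, ∏ i, (p i).eval (z (g k i) ω))
        = (fun ω => ∏ j ∈ Finset.range n, X j ω) from funext hfe]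
      exact hint
    · rw [show (fun ω => ∏ k : Fin L, ∏ i, (p i).eval (z (g k i) ω))
        = (fun ω => ∏ j ∈ Finset.range n, X j ω) from funext hfe]
      rw [hvaleq]
      have h3 : ∀ j, (∫ ω, X j ω) = ∫ ω, (Qn j).eval (z 0 ω) :=
        fun j => (aux_transfer hmeas hident hmom (Qn j) j).2
      rw [Finset.prod_congr rfl (fun j _ => h3 j),
        Finset.prod_range (fun j => ∫ ω, (Qn j).eval (z 0 ω))]
      refine Finset.prod_congr rfl fun j _ => ?_
      simp only [hQn]
      rw [dif_pos j.isLt, Fin.eta, hval]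
  -- vanishing
  have hvan : ∀ g, ∀ j : Fin n, (fib g j).card = 1 → val g j = 0 := by
    intro g j hcard
    obtain ⟨a, ha⟩ := Finset.card_eq_one.mp hcard
    have hQa : Q g j = p a.2 := by
      rw [hQ]; simp only []; rw [ha, Finset.prod_singleton]
    rw [hval]; simp only [hQa]
    exact hp a.2
  have hempty : ∀ g, ∀ j : Fin n,
      j ∉ Finset.image (fun ki : Fin L × Fin d => g ki.1 ki.2) Finset.univ → val g j = 1 := by
    intro g j hj
    have hfe : fib g j = ∅ := by
      rw [hfib]
      simp only [Finset.filter_eq_empty_iff]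
      intro ki _
      intro hcon
      exact hj (Finset.mem_image.mpr ⟨ki, Finset.mem_univ _, hcon⟩)
    have hQ1 : Q g j = 1 := by rw [hQ]; simp only []; rw [hfe, Finset.prod_empty]
    rw [hval]; simp only [hQ1, Polynomial.eval_one]
    simp
  have hKb : ∀ g, ∀ j : Fin n, |val g j| ≤ K := by
    intro g j
    set c : Fin d → ℕ := fun i => ((fib g j).filter (fun ki => ki.2 = i)).card with hc
    have hQc : Q g j = ∏ i, p i ^ c i := by
      rw [hQ]
      simp only []
      rw [← Finset.prod_fiberwise (fib g j) (fun ki => ki.2) (fun ki => p ki.2)]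
      refine Finset.prod_congr rfl fun i _ => ?_
      rw [hc]
      simp only []
      rw [← Finset.prod_const]
      refine Finset.prod_congr rfl fun ki hki => ?_
      rw [(Finset.mem_filter.mp hki).2]
    have hcle : ∀ i, c i ≤ L * d := by
      intro i
      rw [hc]
      calc ((fib g j).filter (fun ki => ki.2 = i)).card
          ≤ (fib g j).card := Finset.card_filter_le _ _
        _ ≤ (Finset.univ : Finset (Fin L × Fin d)).card := Finset.card_le_card (Finset.subset_univ _)
        _ = L * d := by simp [Fintype.card_prod]
    have := Kconst_bound (z 0) d p (L*d) c hcle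
    rw [hval]; simp only [hQc]
    exact this
  have hK1 : (1:ℝ) ≤ K := Kconst_one_le _ _ _ _
  set T : Finset (Fin L → Fin d → Fin n) :=
    P.filter (fun g => ∀ j : Fin n, (fib g j).card ≠ 1) with hT
  have hbound : ∀ g ∈ T, |∏ j : Fin n, val g j| ≤ K ^ (L*d) := by
    intro g _
    have h1 : ∏ j : Fin n, val g j
        = ∏ j ∈ Finset.image (fun ki : Fin L × Fin d => g ki.1 ki.2) Finset.univ, val g j :=
      (Finset.prod_subset (Finset.subset_univ _) (fun j _ hj => hempty g j hj)).symm
    rw [h1, Finset.abs_prod]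
    calc ∏ j ∈ Finset.image (fun ki : Fin L × Fin d => g ki.1 ki.2) Finset.univ, |val g j|
        ≤ ∏ _j ∈ Finset.image (fun ki : Fin L × Fin d => g ki.1 ki.2) Finset.univ, K :=
          Finset.prod_le_prod (fun _ _ => abs_nonneg _) (fun j _ => hKb g j)
      _ = K ^ (Finset.image (fun ki : Fin L × Fin d => g ki.1 ki.2) Finset.univ).card :=
          Finset.prod_const K
      _ ≤ K ^ (L*d) := by
          refine pow_le_pow_right₀ hK1 ?_
          refine Finset.card_image_le.trans ?_
          simp [Fintype.card_prod]
  have hcardR : ∀ g ∈ T,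
      (Finset.image (fun ki : Fin L × Fin d => g ki.1 ki.2) Finset.univ).card ≤ m*d := by
    intro g hg
    have hT' : ∀ j : Fin n, (fib g j).card ≠ 1 := (Finset.mem_filter.mp hg).2
    have hsum : (Finset.univ : Finset (Fin L × Fin d)).card
        = ∑ j ∈ Finset.image (fun ki : Fin L × Fin d => g ki.1 ki.2) Finset.univ,
            (fib g j).card :=
      Finset.card_eq_sum_card_fiberwise
        (f := fun ki : Fin L × Fin d => g ki.1 ki.2)
        (fun ki _ => Finset.mem_image_of_mem _ (Finset.mem_univ ki))
    have h2 : ∀ j ∈ Finset.image (fun ki : Fin L × Fin d => g ki.1 ki.2) Finset.univ,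
        2 ≤ (fib g j).card := by
      intro j hj
      obtain ⟨ki, _, hki⟩ := Finset.mem_image.mp hj
      have hne : (fib g j).Nonempty := ⟨ki, by rw [hfib]; simp [hki]⟩
      have hpos := Finset.card_pos.mpr hne
      have := hT' j
      omega
    have h3 : 2 * (Finset.image (fun ki : Fin L × Fin d => g ki.1 ki.2) Finset.univ).card
        ≤ L * d := by
      calc 2 * (Finset.image (fun ki : Fin L × Fin d => g ki.1 ki.2) Finset.univ).card
          = ∑ _j ∈ Finset.image (fun ki : Fin L × Fin d => g ki.1 ki.2) Finset.univ, 2 := by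
            rw [Finset.sum_const, smul_eq_mul, mul_comm]
        _ ≤ ∑ j ∈ Finset.image (fun ki : Fin L × Fin d => g ki.1 ki.2) Finset.univ,
              (fib g j).card := Finset.sum_le_sum h2
        _ = (Finset.univ : Finset (Fin L × Fin d)).card := hsum.symm
        _ = L * d := by simp [Fintype.card_prod]
    have h4 : L * d = 2*(m*d) := by rw [hL]; ring
    linarith
  have hcount : T.card ≤ n.choose (m*d) * ((m*d)^d)^L := by
    have hsub : T ⊆ (Finset.powersetCard (m*d) (Finset.univ : Finset (Fin n))).biUnion
        (fun R => Fintype.piFinset (fun _ : Fin L => Fintype.piFinset (fun _ : Fin d => R))) := by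
      intro g hg
      obtain ⟨R, hsubR, _, hRcard⟩ := Finset.exists_subsuperset_card_eq
        (Finset.subset_univ (Finset.image (fun ki : Fin L × Fin d => g ki.1 ki.2) Finset.univ))
        (hcardR g hg) (by simpa using hn)
      refine Finset.mem_biUnion.mpr ⟨R, ?_, ?_⟩
      · exact Finset.mem_powersetCard.mpr ⟨Finset.subset_univ _, hRcard⟩
      · refine Fintype.mem_piFinset.mpr fun k => ?_
        refine Fintype.mem_piFinset.mpr fun i => ?_
        exact hsubR (Finset.mem_image_of_mem _ (Finset.mem_univ (k, i)))
    calc T.card ≤ _ := Finset.card_le_card hsub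
      _ ≤ ∑ R ∈ Finset.powersetCard (m*d) (Finset.univ : Finset (Fin n)),
            (Fintype.piFinset (fun _ : Fin L => Fintype.piFinset (fun _ : Fin d => R))).card :=
          Finset.card_biUnion_le
      _ = ∑ R ∈ Finset.powersetCard (m*d) (Finset.univ : Finset (Fin n)), ((m*d)^d)^L := by
          refine Finset.sum_congr rfl fun R hR => ?_
          have hRc : R.card = m*d := (Finset.mem_powersetCard.mp hR).2
          rw [Fintype.card_piFinset_const, Fintype.card_piFinset_const, hRc]
      _ = n.choose (m*d) * ((m*d)^d)^L := by
          rw [Finset.sum_const, smul_eq_mul, Finset.card_powersetCard, Finset.card_univ,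
            Fintype.card_fin]
  -- integrability of the power
  have hSint : Integrable (fun ω => (∑ f ∈ I, ∏ i, (p i).eval (z (f i) ω)) ^ L) ℙ := by
    have : (fun ω => (∑ f ∈ I, ∏ i, (p i).eval (z (f i) ω)) ^ L)
        = fun ω => ∑ g ∈ P, ∏ k : Fin L, ∏ i, (p i).eval (z (g k i) ω) := funext expand
    rw [this]
    exact integrable_finset_sum _ (fun g _ => (hterm g).1)
  refine ⟨hSint, ?_⟩
  have hIv : (∫ ω, (∑ f ∈ I, ∏ i, (p i).eval (z (f i) ω)) ^ L)
      = ∑ g ∈ P, ∏ j : Fin n, val g j := by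
    have h1 : (∫ ω, (∑ f ∈ I, ∏ i, (p i).eval (z (f i) ω)) ^ L)
        = ∑ g ∈ P, ∫ ω, ∏ k : Fin L, ∏ i, (p i).eval (z (g k i) ω) := by
      rw [show (fun ω => (∑ f ∈ I, ∏ i, (p i).eval (z (f i) ω)) ^ L)
        = fun ω => ∑ g ∈ P, ∏ k : Fin L, ∏ i, (p i).eval (z (g k i) ω) from funext expand]
      exact integral_finset_sum _ (fun g _ => (hterm g).1)
    rw [h1]
    exact Finset.sum_congr rfl (fun g _ => (hterm g).2)
  have hTsum : ∑ g ∈ P, ∏ j : Fin n, val g j = ∑ g ∈ T, ∏ j : Fin n, val g j := by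
    rw [hT, Finset.sum_filter_of_ne]
    intro g hg hne
    by_contra hcon
    push_neg at hcon
    obtain ⟨j, hj⟩ := hcon
    exact hne (Finset.prod_eq_zero (Finset.mem_univ j) (hvan g j hj))
  have hfinal : (∫ ω, (∑ f ∈ I, ∏ i, (p i).eval (z (f i) ω)) ^ L)
      ≤ (T.card : ℝ) * K ^ (L*d) := by
    rw [hIv, hTsum]
    calc ∑ g ∈ T, ∏ j : Fin n, val g j ≤ |∑ g ∈ T, ∏ j : Fin n, val g j| := le_abs_self _
      _ ≤ ∑ g ∈ T, |∏ j : Fin n, val g j| := Finset.abs_sum_le_sum_abs _ _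
      _ ≤ ∑ g ∈ T, K ^ (L*d) := Finset.sum_le_sum hbound
      _ = (T.card : ℝ) * K ^ (L*d) := by rw [Finset.sum_const, nsmul_eq_mul]
  have hcc : (T.card : ℝ) ≤ (n:ℝ)^(m*d) * ((m*d : ℝ))^(d*L) := by
    have h2 : (T.card : ℝ) ≤ ((n.choose (m*d) * ((m*d)^d)^L : ℕ) : ℝ) := Nat.cast_le.mpr hcount
    have h4 : (n.choose (m*d) : ℝ) ≤ (n:ℝ)^(m*d) := by
      exact_mod_cast Nat.cast_le.mpr (Nat.choose_le_pow n (m*d))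
    calc (T.card : ℝ) ≤ ((n.choose (m*d) * ((m*d)^d)^L : ℕ) : ℝ) := h2
      _ = (n.choose (m*d) : ℝ) * ((m*d : ℝ))^(d*L) := by push_cast; rw [← pow_mul]
      _ ≤ (n:ℝ)^(m*d) * ((m*d : ℝ))^(d*L) := by
          refine mul_le_mul_of_nonneg_right h4 ?_
          positivity
  have hKpos : (0:ℝ) ≤ K ^ (L*d) := by positivity
  calc (∫ ω, (∑ f ∈ I, ∏ i, (p i).eval (z (f i) ω)) ^ L)
      ≤ (T.card : ℝ) * K ^ (L*d) := hfinal
    _ ≤ ((n:ℝ)^(m*d) * ((m*d : ℝ))^(d*L)) * K ^ (L*d) := by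
        exact mul_le_mul_of_nonneg_right hcc hKpos
    _ = ((m*d : ℝ))^(d*L) * K^(L*d) * (n:ℝ)^(m*d) := by ring
    _ = ((m*d : ℝ))^(d*(2*m)) * (Kconst (z 0) d p (2*m*d))^(2*m*d) * (n:ℝ)^(m*d) := by
        rw [hK, hL]

end AuxStmt2

theorem stmt2 {Ω : Type*} [MeasureSpace Ω] [IsProbabilityMeasure (ℙ : Measure Ω)]
    (z : ℕ → Ω → ℝ) (hmeas : ∀ j, Measurable (z j))
    (hindep : iIndepFun z ℙ)
    (hident : ∀ j, Measure.map (z j) ℙ = Measure.map (z 0) ℙ)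
    (hmom : ∀ k : ℕ, Integrable (fun ω => |z 0 ω| ^ k) ℙ)
    (hmean : (∫ ω, z 0 ω) = 0) (hvar : (∫ ω, (z 0 ω) ^ 2) = 1)
    (d : ℕ) (p : Fin d → Polynomial ℝ)
    (hp : ∀ i, (∫ ω, (p i).eval (z 0 ω)) = 0) :
    ∀ α > (0:ℝ), ∀ β > (0:ℝ), ∃ N : ℕ, ∀ n ≥ N,
      (ℙ {ω | (n : ℝ) ^ α <
          (n : ℝ) ^ (-(d : ℝ) / 2) *
            |∑ f ∈ Finset.univ.filter (fun f : Fin d → Fin n => Function.Injective f),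
              ∏ i, (p i).eval (z (f i) ω)|}).toReal < (n : ℝ) ^ (-β) := by
  intro α hα β hβ
  set m : ℕ := ⌈β / (2*α)⌉₊ + 1 with hm
  have hmR : β / (2*α) < (m : ℝ) := by
    have := Nat.le_ceil (β / (2*α))
    push_cast [hm]
    linarith
  have hexp : 0 < 2*(m:ℝ)*α - β := by
    have h2a : (0:ℝ) < 2*α := by linarith
    rw [div_lt_iff₀ h2a] at hmR
    nlinarith
  set C : ℝ := ((m*d : ℝ))^(d*(2*m)) * (Kconst (z 0) d p (2*m*d))^(2*m*d) with hC
  have htend : Filter.Tendsto (fun n : ℕ => (n:ℝ) ^ (2*(m:ℝ)*α - β)) Filter.atTop Filter.atTop :=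
    (tendsto_rpow_atTop hexp).comp tendsto_natCast_atTop_atTop
  obtain ⟨N0, hN0⟩ := Filter.eventually_atTop.mp (htend.eventually_gt_atTop C)
  refine ⟨max N0 (max (m*d) 1), fun n hn => ?_⟩
  have hnN0 : N0 ≤ n := le_trans (le_max_left _ _) hn
  have hnmd : m*d ≤ n := le_trans (le_trans (le_max_left _ _) (le_max_right _ _)) hn
  have hn1 : 1 ≤ n := le_trans (le_trans (le_max_right _ _) (le_max_right _ _)) hn
  have hx0 : (0:ℝ) < (n:ℝ) := by exact_mod_cast Nat.lt_of_lt_of_le Nat.zero_lt_one hn1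
  obtain ⟨hint, hbd⟩ := moment_bound z hmeas hindep hident hmom d p hp m n hnmd
  set S : Ω → ℝ := fun ω => ∑ f ∈ Finset.univ.filter (fun f : Fin d → Fin n => Function.Injective f),
      ∏ i, (p i).eval (z (f i) ω) with hS
  set c : ℝ := (n:ℝ) ^ (-(d:ℝ)/2) with hc
  set ε : ℝ := ((n:ℝ) ^ α) ^ (2*m) with hε
  have hc0 : 0 ≤ c := (Real.rpow_pos_of_pos hx0 _).le
  have hLev : Even (2*m) := even_two_mul m
  have hfeq : ∀ ω, (c * |S ω|) ^ (2*m) = c^(2*m) * S ω ^ (2*m) := by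
    intro ω
    rw [mul_pow, hLev.pow_abs]
  have hfint : Integrable (fun ω => (c * |S ω|) ^ (2*m)) ℙ := by
    rw [show (fun ω => (c * |S ω|) ^ (2*m)) = fun ω => c^(2*m) * S ω ^ (2*m) from funext hfeq]
    exact hint.const_mul _
  have hmarkov := mul_meas_ge_le_integral_of_nonneg
    (f := fun ω => (c * |S ω|) ^ (2*m)) (μ := ℙ)
    (Filter.Eventually.of_forall fun ω => by positivity) hfint ε
  have hsub : {ω | (n : ℝ) ^ α < c * |S ω|} ⊆ {ω | ε ≤ (c * |S ω|) ^ (2*m)} := by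
    intro ω hω
    have h1 : (n:ℝ)^α ≤ c * |S ω| := le_of_lt hω
    have h2 : ((n:ℝ)^α)^(2*m) ≤ (c * |S ω|)^(2*m) :=
      pow_le_pow_left₀ (Real.rpow_pos_of_pos hx0 _).le h1 _
    exact h2
  have hmono : (ℙ {ω | (n : ℝ) ^ α < c * |S ω|}).toReal
      ≤ (ℙ {ω | ε ≤ (c * |S ω|) ^ (2*m)}).toReal :=
    ENNReal.toReal_mono (measure_ne_top _ _) (measure_mono hsub)
  -- value of the integral bound
  have hIb : (∫ ω, (c * |S ω|) ^ (2*m)) ≤ c^(2*m) * (C * (n:ℝ)^(m*d)) := by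
    rw [show (fun ω => (c * |S ω|) ^ (2*m)) = fun ω => c^(2*m) * S ω ^ (2*m) from funext hfeq]
    rw [integral_const_mul]
    refine mul_le_mul_of_nonneg_left ?_ (by positivity)
    rw [hC]
    exact hbd
  have hε0 : 0 < ε := by
    rw [hε]
    positivity
  have hPle : (ℙ {ω | (n : ℝ) ^ α < c * |S ω|}).toReal
      ≤ (c^(2*m) * (C * (n:ℝ)^(m*d))) / ε := by
    rw [le_div_iff₀ hε0]
    calc (ℙ {ω | (n : ℝ) ^ α < c * |S ω|}).toReal * ε
        ≤ (ℙ {ω | ε ≤ (c * |S ω|) ^ (2*m)}).toReal * ε :=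
          mul_le_mul_of_nonneg_right hmono hε0.le
      _ = ε * (ℙ {ω | ε ≤ (c * |S ω|) ^ (2*m)}).toReal := mul_comm _ _
      _ ≤ ∫ ω, (c * |S ω|) ^ (2*m) := hmarkov
      _ ≤ c^(2*m) * (C * (n:ℝ)^(m*d)) := hIb
  -- simplify the RHS into rpow form
  have hrhs : (c^(2*m) * (C * (n:ℝ)^(m*d))) / ε = C * (n:ℝ) ^ (-(2*(m:ℝ)*α)) := by
    have h1 : c^(2*m) = (n:ℝ) ^ ((-(d:ℝ)/2) * (2*m : ℕ)) := by
      rw [hc, ← Real.rpow_natCast ((n:ℝ) ^ (-(d:ℝ)/2)) (2*m), ← Real.rpow_mul hx0.le]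
    have h2 : ((n:ℝ):ℝ)^(m*d : ℕ) = (n:ℝ) ^ ((m*d : ℕ) : ℝ) := (Real.rpow_natCast _ _).symm
    have h3 : ε = (n:ℝ) ^ (α * (2*m : ℕ)) := by
      rw [hε, ← Real.rpow_natCast ((n:ℝ) ^ α) (2*m), ← Real.rpow_mul hx0.le]
    rw [h1, h2, h3, div_eq_mul_inv, ← Real.rpow_neg hx0.le]
    rw [show (-(d:ℝ)/2) * ((2*m : ℕ):ℝ) = -((m*d:ℕ):ℝ) by push_cast; ring]
    calc (n:ℝ) ^ (-((m*d:ℕ):ℝ)) * (C * (n:ℝ) ^ ((m*d:ℕ):ℝ)) * (n:ℝ) ^ (-(α * ((2*m:ℕ):ℝ)))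
        = C * ((n:ℝ) ^ (-((m*d:ℕ):ℝ)) * (n:ℝ) ^ ((m*d:ℕ):ℝ) * (n:ℝ) ^ (-(α * ((2*m:ℕ):ℝ)))) := by
          ring
      _ = C * (n:ℝ) ^ (-(2*(m:ℝ)*α)) := by
          rw [← Real.rpow_add hx0, ← Real.rpow_add hx0]
          congr 1
          push_cast
          ring
  have hfinal : C * (n:ℝ) ^ (-(2*(m:ℝ)*α)) < (n:ℝ) ^ (-β) := by
    have hCn := hN0 n hnN0
    calc C * (n:ℝ) ^ (-(2*(m:ℝ)*α))
        < (n:ℝ) ^ (2*(m:ℝ)*α - β) * (n:ℝ) ^ (-(2*(m:ℝ)*α)) :=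
          mul_lt_mul_of_pos_right hCn (Real.rpow_pos_of_pos hx0 _)
      _ = (n:ℝ) ^ (-β) := by
          rw [← Real.rpow_add hx0]
          congr 1
          ring
  calc (ℙ {ω | (n : ℝ) ^ α < c * |S ω|}).toReal
      ≤ (c^(2*m) * (C * (n:ℝ)^(m*d))) / ε := hPle
    _ = C * (n:ℝ) ^ (-(2*(m:ℝ)*α)) := hrhs
    _ < (n:ℝ) ^ (-β) := hfinal
end

section
/- Let x ∈ ℝ^p with ‖x‖₂ < 1 and m = ⌈log₂ p⌉. Define y ∈ ℝ^p by y_i = 2^{−l/2} sign(x_i) if 2^{−l} ≤ x_i² < 2^{−l+1} for some integer 0 ≤ l ≤ m+3, and y_i = 0 if x_i² < 2^{−m−3}. Then ‖y‖₂ ≤ ‖x‖₂ < 1 and ‖x − y‖₂ < 9/20. -/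
theorem stmt5 (p : ℕ) (x y : Fin p → ℝ)
    (hx : Real.sqrt (∑ i, x i ^ 2) < 1)
    (m : ℕ) (hm : m = Nat.clog 2 p)
    (hy0 : ∀ i, x i ^ 2 < ((2:ℝ) ^ (m + 3))⁻¹ → y i = 0)
    (hyl : ∀ i, ∀ l : ℕ, l ≤ m + 3 → ((2:ℝ) ^ l)⁻¹ ≤ x i ^ 2 →
      x i ^ 2 < 2 * ((2:ℝ) ^ l)⁻¹ →
      y i = Real.sqrt (((2:ℝ) ^ l)⁻¹) * Real.sign (x i)) :
    Real.sqrt (∑ i, y i ^ 2) ≤ Real.sqrt (∑ i, x i ^ 2) ∧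
      Real.sqrt (∑ i, (x i - y i) ^ 2) < 9 / 20 := by
  have hS0 : (0:ℝ) ≤ ∑ i, x i ^ 2 := Finset.sum_nonneg fun i _ => sq_nonneg _
  have hS1 : ∑ i, x i ^ 2 < 1 := by
    have := (Real.sqrt_lt' one_pos).mp hx
    simpa using this
  set s : ℝ := Real.sqrt 2 with hs
  have hs2 : s ^ 2 = 2 := Real.sq_sqrt (by norm_num)
  have hs0 : 0 ≤ s := Real.sqrt_nonneg 2
  clear_value s
  have hslb : (1.414 : ℝ) < s := by nlinarith
  have hsub : s < 1.415 := by nlinarith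
  set c : ℝ := (3 - 2 * s) / 2 with hc
  clear_value c
  have hc0 : 0 < c := by rw [hc]; nlinarith
  have hc1 : c < 1 := by rw [hc]; nlinarith
  have hxle : ∀ i, x i ^ 2 ≤ ∑ j, x j ^ 2 := fun i =>
    Finset.single_le_sum (fun j _ => sq_nonneg (x j)) (Finset.mem_univ i)
  have key : ∀ i, (x i - y i) ^ 2 ≤
      c * x i ^ 2 + (1 - c) * min (x i ^ 2) (((2:ℝ) ^ (m + 3))⁻¹) ∧
      y i ^ 2 ≤ x i ^ 2 := by
    intro i
    by_cases hA : x i ^ 2 < ((2:ℝ) ^ (m + 3))⁻¹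
    · have hyi := hy0 i hA
      rw [hyi, min_eq_left hA.le]
      constructor
      · nlinarith [sq_nonneg (x i)]
      · simpa using sq_nonneg (x i)
    · push_neg at hA
      have hx1 : x i ^ 2 < 1 := lt_of_le_of_lt (hxle i) hS1
      have hex : ∃ l : ℕ, ((2:ℝ) ^ l)⁻¹ ≤ x i ^ 2 := ⟨m + 3, hA⟩
      set l := Nat.find hex with hl
      have h1 : ((2:ℝ) ^ l)⁻¹ ≤ x i ^ 2 := Nat.find_spec hex
      have hlle : l ≤ m + 3 := Nat.find_min' hex hA
      have hl1 : 1 ≤ l := by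
        rcases Nat.eq_zero_or_pos l with h | h
        · rw [h, pow_zero, inv_one] at h1; linarith
        · exact h
      have h2 : x i ^ 2 < 2 * ((2:ℝ) ^ l)⁻¹ := by
        have hmin := Nat.find_min hex (show l - 1 < l by omega)
        push_neg at hmin
        have hpow : (2:ℝ) ^ l = 2 ^ (l - 1) * 2 := by
          rw [← pow_succ]; congr 1; omega
        rw [hpow]
        have h2pos : (0:ℝ) < 2 ^ (l - 1) := by positivity
        calc x i ^ 2 < ((2:ℝ) ^ (l - 1))⁻¹ := hmin
          _ = 2 * ((2:ℝ) ^ (l - 1) * 2)⁻¹ := by field_simp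
      have hyi := hyl i l hlle h1 h2
      clear_value l
      have hbpos : (0:ℝ) < ((2:ℝ) ^ l)⁻¹ := by positivity
      have hx2pos : 0 < x i ^ 2 := lt_of_lt_of_le hbpos h1
      have hxne : x i ≠ 0 := by
        intro h; rw [h] at hx2pos; simp at hx2pos
      set b : ℝ := Real.sqrt (((2:ℝ) ^ l)⁻¹) with hb
      have hb2 : b ^ 2 = ((2:ℝ) ^ l)⁻¹ := Real.sq_sqrt hbpos.le
      have hb0 : 0 ≤ b := Real.sqrt_nonneg _
      have hsgn : Real.sign (x i) ^ 2 = 1 := by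
        rcases lt_trichotomy (x i) 0 with h | h | h
        · rw [Real.sign_of_neg h]; norm_num
        · exact absurd h hxne
        · rw [Real.sign_of_pos h]; norm_num
      have hy2 : y i ^ 2 = ((2:ℝ) ^ l)⁻¹ := by
        rw [hyi, mul_pow, hb2, hsgn, mul_one]
      have hyx2 : y i ^ 2 ≤ x i ^ 2 := by rw [hy2]; exact h1
      refine ⟨?_, hyx2⟩
      -- rewrite (x - y)^2 = (|x| - b)^2
      set a : ℝ := |x i| with ha
      have ha2 : a ^ 2 = x i ^ 2 := sq_abs _
      have ha0 : 0 ≤ a := abs_nonneg _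
      clear_value b a
      have hxy : (x i - y i) ^ 2 = (a - b) ^ 2 := by
        rw [hyi, ha]
        rcases hxne.lt_or_gt with h | h
        · rw [Real.sign_of_neg h, abs_of_neg h]; ring
        · rw [Real.sign_of_pos h, abs_of_pos h]; ring
      -- b ≤ a and a < s * b
      have hba : b ≤ a := by
        have h' : b ^ 2 ≤ a ^ 2 := by rw [hb2, ha2]; exact h1
        exact (pow_le_pow_iff_left₀ hb0 ha0 two_ne_zero).1 h'
      have hasb : a < s * b := by
        have h' : a ^ 2 < (s * b) ^ 2 := by
          rw [mul_pow, hs2, ha2, hb2]; exact h2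
        exact (pow_lt_pow_iff_left₀ ha0 (mul_nonneg hs0 hb0) two_ne_zero).1 h'
      have hspos : 0 < s := by linarith
      have h3 : a / s ≤ b := (div_le_iff₀ hspos).2 (by nlinarith)
      have h6a : a / s = a * s / 2 := by
        rw [div_eq_div_iff hspos.ne' (by norm_num : (2:ℝ) ≠ 0)]
        linear_combination (-a) * hs2
      have h4 : 0 ≤ a - b := sub_nonneg.2 hba
      have hkey : (a - b) ^ 2 ≤ c * a ^ 2 := by
        rw [hc]
        calc (a - b) ^ 2 ≤ (a - a * s / 2) ^ 2 := by
              apply pow_le_pow_left₀ h4 _ 2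
              rw [← h6a]; linarith
          _ = (3 - 2 * s) / 2 * a ^ 2 := by linear_combination (a ^ 2 / 4) * hs2
      have hmin0 : 0 ≤ min (x i ^ 2) (((2:ℝ) ^ (m + 3))⁻¹) :=
        le_min (sq_nonneg _) (by positivity)
      have hcm : 0 ≤ (1 - c) * min (x i ^ 2) (((2:ℝ) ^ (m + 3))⁻¹) :=
        mul_nonneg (by linarith) hmin0
      have hkey' : (x i - y i) ^ 2 ≤ c * x i ^ 2 := by
        rw [hxy, ← ha2]; exact hkey
      linarith
  constructor
  · exact Real.sqrt_le_sqrt (Finset.sum_le_sum fun i _ => (key i).2)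
  · rw [Real.sqrt_lt' (by norm_num : (0:ℝ) < 9/20)]
    have hsum : ∑ i, (x i - y i) ^ 2 ≤
        c * (∑ i, x i ^ 2) + (1 - c) * ∑ i, min (x i ^ 2) (((2:ℝ) ^ (m + 3))⁻¹) := by
      rw [Finset.mul_sum, Finset.mul_sum, ← Finset.sum_add_distrib]
      exact Finset.sum_le_sum fun i _ => (key i).1
    have hpm : (p:ℝ) ≤ (2:ℝ) ^ m := by
      have := Nat.le_pow_clog (by norm_num : 1 < 2) p
      rw [← hm] at this
      exact_mod_cast this
    have hminsum : ∑ i, min (x i ^ 2) (((2:ℝ) ^ (m + 3))⁻¹) ≤ (1:ℝ)/8 := by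
      calc ∑ i : Fin p, min (x i ^ 2) (((2:ℝ) ^ (m + 3))⁻¹)
          ≤ ∑ _i : Fin p, ((2:ℝ) ^ (m + 3))⁻¹ :=
            Finset.sum_le_sum fun i _ => min_le_right _ _
        _ = (p:ℝ) * ((2:ℝ) ^ (m + 3))⁻¹ := by
            rw [Finset.sum_const]; simp [mul_comm]
        _ ≤ (2:ℝ) ^ m * ((2:ℝ) ^ (m + 3))⁻¹ := by
            apply mul_le_mul_of_nonneg_right hpm (by positivity)
        _ = (1:ℝ)/8 := by
            rw [pow_add]
            field_simp
            norm_num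
    have h18c : 0 ≤ 1 - c := by linarith
    have : ∑ i, (x i - y i) ^ 2 < c + (1 - c) * (1/8) := by
      have h1 : c * (∑ i, x i ^ 2) < c := by
        have h' := mul_lt_mul_of_pos_left hS1 hc0
        simpa using h'
      have h2 : (1 - c) * ∑ i, min (x i ^ 2) (((2:ℝ) ^ (m + 3))⁻¹) ≤ (1 - c) * (1/8) :=
        mul_le_mul_of_nonneg_left hminsum h18c
      linarith
    have hfin : c + (1 - c) * (1/8) ≤ (9/20:ℝ) ^ 2 := by rw [hc]; nlinarith [hslb]
    linarith
end

section
/- Let m = ⌈log₂ p⌉ and let D₂^p be the set of y ∈ ℝ^p with ‖y‖₂ ≤ 1 and each y_i² ∈ {0, 1, 2^{−1}, ..., 2^{−(m+3)}}. For 0 ≤ l ≤ m+3 let π_l(y) be y with all coordinates of squared magnitude less than 2^{−l} set to zero. Then there is an absolute constant C > 0 such that log |{π_l(y) : y ∈ D₂^p}| ≤ C (m + 4 − l) 2^l for all 0 ≤ l ≤ m + 3. -/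
/-- Latala's dyadic net: unit vectors whose squared coordinates lie in
`{0, 1, 2⁻¹, ..., 2^{-(m+3)}}`, with `m = ⌈log₂ p⌉`. -/
def latalaNet (p : ℕ) : Set (Fin p → ℝ) :=
  {y | Real.sqrt (∑ i, y i ^ 2) ≤ 1 ∧
    ∀ i, y i ^ 2 = 0 ∨ ∃ j : ℕ, j ≤ Nat.clog 2 p + 3 ∧ y i ^ 2 = ((2:ℝ) ^ j)⁻¹}

/-- `π_l` zeroes out all coordinates with squared value less than `2^{-l}`. -/
noncomputable def latalaProj (p l : ℕ) (y : Fin p → ℝ) : Fin p → ℝ :=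
  fun i => if ((2:ℝ) ^ l)⁻¹ ≤ y i ^ 2 then y i else 0

open Finset

lemma sum_choose_le (N n : ℕ) (hn : 1 ≤ n) :
    ((∑ k ∈ Finset.range (n+1), N.choose k : ℕ) : ℝ) ≤
      Real.exp n * (max 1 ((N:ℝ)/(n:ℝ)))^n := by
  have hmax : (1:ℝ) ≤ max 1 ((N:ℝ)/(n:ℝ)) := le_max_left _ _
  have hexp2 : (2:ℝ)^n ≤ Real.exp n := by
    calc (2:ℝ)^n ≤ (Real.exp 1)^n := by
          apply pow_le_pow_left₀ (by norm_num)
          have := Real.add_one_le_exp (1:ℝ); linarith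
      _ = Real.exp n := by rw [← Real.exp_nat_mul]; ring_nf
  rcases le_or_gt N n with h | h
  · have h1 : (∑ k ∈ Finset.range (n+1), N.choose k) = 2^N := by
      rw [← Nat.sum_range_choose N]
      symm
      apply Finset.sum_subset (Finset.range_subset_range.mpr (by omega))
      intro k _ hk
      exact Nat.choose_eq_zero_of_lt (by simpa using hk)
    rw [h1]
    calc ((2^N : ℕ):ℝ) = 2^N := by push_cast; ring
      _ ≤ 2^n := by apply pow_le_pow_right₀ (by norm_num) h
      _ ≤ Real.exp n := hexp2
      _ ≤ Real.exp n * (max 1 ((N:ℝ)/(n:ℝ)))^n := by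
          nth_rewrite 1 [← mul_one (Real.exp n)]
          apply mul_le_mul_of_nonneg_left _ (Real.exp_nonneg _)
          calc (1:ℝ) = 1^n := (one_pow n).symm
            _ ≤ _ := pow_le_pow_left₀ zero_le_one hmax n
  · -- n < N
    have hn0 : (0:ℝ) < n := by exact_mod_cast hn
    have hN0 : (0:ℝ) < N := by have : 0 < N := by omega
                               exact_mod_cast this
    set x : ℝ := (n:ℝ)/(N:ℝ) with hx
    have hx0 : 0 < x := by positivity
    have hx1 : x ≤ 1 := by rw [hx, div_le_one hN0]; exact_mod_cast h.le
    have hNn1 : (1:ℝ) ≤ (N:ℝ)/(n:ℝ) := by rw [le_div_iff₀ hn0]; simpa using (by exact_mod_cast h.le : (n:ℝ) ≤ N)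
    have hmax' : max 1 ((N:ℝ)/(n:ℝ)) = (N:ℝ)/(n:ℝ) := max_eq_right hNn1
    have key : ∀ k ∈ Finset.range (n+1), (N.choose k : ℝ) ≤ (N.choose k : ℝ) * x^k * ((N:ℝ)/(n:ℝ))^n := by
      intro k hk
      have hk' : k ≤ n := by simpa using Nat.lt_succ_iff.mp (Finset.mem_range.mp hk)
      have h1 : x^n ≤ x^k := pow_le_pow_of_le_one hx0.le hx1 hk'
      have h2 : (1:ℝ) = x^n * ((N:ℝ)/(n:ℝ))^n := by
        rw [← mul_pow]; rw [hx]; field_simp; exact (one_pow n).symm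
      have h3 : (1:ℝ) ≤ x^k * ((N:ℝ)/(n:ℝ))^n := by
        rw [h2]
        apply mul_le_mul_of_nonneg_right h1 (by positivity)
      nlinarith [(Nat.cast_nonneg (N.choose k) : (0:ℝ) ≤ N.choose k), h3]
    calc ((∑ k ∈ Finset.range (n+1), N.choose k : ℕ) : ℝ)
        = ∑ k ∈ Finset.range (n+1), (N.choose k : ℝ) := by push_cast; ring
      _ ≤ ∑ k ∈ Finset.range (n+1), (N.choose k : ℝ) * x^k * ((N:ℝ)/(n:ℝ))^n :=
          Finset.sum_le_sum key
      _ = (∑ k ∈ Finset.range (n+1), (N.choose k : ℝ) * x^k) * ((N:ℝ)/(n:ℝ))^n := by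
          rw [Finset.sum_mul]
      _ ≤ (∑ k ∈ Finset.range (N+1), (N.choose k : ℝ) * x^k) * ((N:ℝ)/(n:ℝ))^n := by
          apply mul_le_mul_of_nonneg_right _ (by positivity)
          apply Finset.sum_le_sum_of_subset_of_nonneg (Finset.range_subset_range.mpr (by omega))
          intro k _ _; positivity
      _ = (x+1)^N * ((N:ℝ)/(n:ℝ))^n := by
          congr 1
          rw [add_pow]
          apply Finset.sum_congr rfl
          intro k _; rw [one_pow]; ring
      _ ≤ Real.exp n * (max 1 ((N:ℝ)/(n:ℝ)))^n := by
          rw [hmax']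
          apply mul_le_mul_of_nonneg_right _ (by positivity)
          calc (x+1)^N ≤ (Real.exp x)^N := by
                apply pow_le_pow_left₀ (by positivity)
                have := Real.add_one_le_exp x; linarith
            _ = Real.exp (x * N) := by rw [← Real.exp_nat_mul]; ring_nf
            _ = Real.exp n := by rw [hx]; field_simp

lemma card_bound (p l : ℕ) :
    (latalaProj p l '' latalaNet p).ncard ≤
      ∏ j ∈ Finset.range (l+1), ∑ k ∈ Finset.range (2^j+1), (p*2).choose k := by
  classical
  set S := latalaProj p l '' latalaNet p with hSdef
  have hsum : ∀ z ∈ S, ∑ i, z i ^ 2 ≤ 1 := by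
    rintro z ⟨y, hy, rfl⟩
    have h1 : ∑ i, (latalaProj p l y) i ^ 2 ≤ ∑ i, y i ^ 2 := by
      apply Finset.sum_le_sum
      intro i _
      by_cases h : ((2:ℝ) ^ l)⁻¹ ≤ y i ^ 2 <;> simp [latalaProj, h, sq_nonneg]
    have h2 : Real.sqrt (∑ i, y i ^ 2) ≤ 1 := hy.1
    have h3 : (0:ℝ) ≤ ∑ i, y i ^ 2 := Finset.sum_nonneg (fun i _ => sq_nonneg _)
    nlinarith [Real.sq_sqrt h3, Real.sqrt_nonneg (∑ i, y i ^ 2)]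
  have hlev : ∀ z ∈ S, ∀ i, z i ≠ 0 → ∃ j : ℕ, j ≤ l ∧ z i ^ 2 = ((2:ℝ)^j)⁻¹ := by
    rintro z ⟨y, hy, rfl⟩ i hzi
    by_cases h : ((2:ℝ) ^ l)⁻¹ ≤ y i ^ 2
    · have hz : (latalaProj p l y) i = y i := by simp [latalaProj, h]
      rcases hy.2 i with h0 | ⟨j, hj, hj2⟩
      · exfalso; rw [h0] at h
        have : (0:ℝ) < ((2:ℝ)^l)⁻¹ := by positivity
        linarith
      · refine ⟨j, ?_, by rw [hz, hj2]⟩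
        by_contra hjl
        push_neg at hjl
        have h4 : (2:ℝ)^l < 2^j := by
          apply pow_lt_pow_right₀ one_lt_two hjl
        have h5 : ((2:ℝ)^j)⁻¹ < ((2:ℝ)^l)⁻¹ := by
          apply inv_strictAnti₀ (by positivity) h4
        rw [hj2] at h
        linarith
    · exfalso; apply hzi; simp [latalaProj, h]
  set Φ : (Fin p → ℝ) → (Fin (l+1) → Finset (Fin p × Bool)) := fun z j =>
    Finset.univ.filter
      (fun ib => z ib.1 ^ 2 = ((2:ℝ)^(j:ℕ))⁻¹ ∧ ib.2 = decide (0 < z ib.1)) with hΦdef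
  have aux : ∀ z ∈ S, ∀ w ∈ S, Φ z = Φ w → ∀ i, z i ≠ 0 → z i = w i := by
    intro z hz w hw h i hzi
    obtain ⟨j, hjl, hj⟩ := hlev z hz i hzi
    have hmem : (i, decide (0 < z i)) ∈ Φ z ⟨j, by omega⟩ := by
      simp only [hΦdef, Finset.mem_filter, Finset.mem_univ, true_and]
      exact ⟨hj, trivial⟩
    rw [h] at hmem
    simp only [hΦdef, Finset.mem_filter, Finset.mem_univ, true_and] at hmem
    obtain ⟨hw2, hsgn⟩ := hmem
    have hsq : z i ^ 2 = w i ^ 2 := by rw [hj, hw2]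
    have hiff : (0 < z i) ↔ (0 < w i) := by simpa using hsgn
    have habs : |z i| = |w i| := by
      rw [← Real.sqrt_sq_eq_abs, ← Real.sqrt_sq_eq_abs, hsq]
    rcases abs_eq_abs.mp habs with h1 | h1
    · exact h1
    · rcases lt_trichotomy (z i) 0 with hlt | he | hgt
      · have : ¬ (0 < w i) := by rw [← hiff]; linarith
        push_neg at this; exfalso; apply hzi; linarith
      · exact absurd he hzi
      · have : 0 < w i := hiff.mp hgt
        exfalso; apply hzi; linarith
  have hΦinj : Set.InjOn Φ S := by
    intro z hz w hw h
    funext i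
    by_cases hzi : z i = 0
    · by_cases hwi : w i = 0
      · rw [hzi, hwi]
      · have := aux w hw z hz h.symm i hwi
        rw [hzi] at this
        exact absurd this hwi
    · exact aux z hz w hw h i hzi
  have hcard : ∀ z ∈ S, ∀ j : Fin (l+1), (Φ z j).card ≤ 2^(j:ℕ) := by
    intro z hz j
    set A := Finset.univ.filter (fun i : Fin p => z i ^ 2 = ((2:ℝ)^(j:ℕ))⁻¹) with hA
    have h1 : (Φ z j).card ≤ A.card := by
      apply Finset.card_le_card_of_injOn Prod.fst
      · intro ib hib
        simp only [hΦdef, Finset.mem_coe, Finset.mem_filter, Finset.mem_univ, true_and] at hib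
        simp only [hA, Finset.mem_coe, Finset.mem_filter, Finset.mem_univ, true_and]
        exact hib.1
      · intro a ha b hb hab
        simp only [hΦdef, Finset.mem_coe, Finset.mem_filter, Finset.mem_univ, true_and] at ha hb
        have : a.2 = b.2 := by rw [ha.2, hb.2, hab]
        exact Prod.ext hab this
    have h2 : (A.card : ℝ) * ((2:ℝ)^(j:ℕ))⁻¹ ≤ 1 := by
      have heq : (A.card : ℝ) * ((2:ℝ)^(j:ℕ))⁻¹ = ∑ i ∈ A, z i ^ 2 := by
        rw [Finset.sum_congr rfl (fun i hi => (Finset.mem_filter.mp hi).2),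
          Finset.sum_const, nsmul_eq_mul]
      rw [heq]
      exact le_trans (Finset.sum_le_sum_of_subset_of_nonneg (Finset.subset_univ A)
        (fun i _ _ => sq_nonneg _)) (hsum z hz)
    have h3 : A.card ≤ 2^(j:ℕ) := by
      have hp : (0:ℝ) < 2^(j:ℕ) := by positivity
      have hinv : ((2:ℝ)^(j:ℕ))⁻¹ * 2^(j:ℕ) = 1 := inv_mul_cancel₀ (ne_of_gt hp)
      rw [← Nat.cast_le (α := ℝ)]
      push_cast
      nlinarith [h2, hinv, hp, Nat.cast_nonneg (α := ℝ) A.card]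
    exact le_trans h1 h3
  set t : Fin (l+1) → Finset (Finset (Fin p × Bool)) := fun j =>
    Finset.univ.filter (fun s => s.card ≤ 2^(j:ℕ)) with ht
  set Tf : Finset (Fin (l+1) → Finset (Fin p × Bool)) := Fintype.piFinset t with hTf
  have hsub : Φ '' S ⊆ ↑Tf := by
    rintro _ ⟨z, hz, rfl⟩
    simp only [hTf, Finset.mem_coe, Fintype.mem_piFinset, ht, Finset.mem_filter,
      Finset.mem_univ, true_and]
    exact fun j => hcard z hz j
  have factor_le : ∀ j : Fin (l+1),
      (t j).card ≤ ∑ k ∈ Finset.range (2^(j:ℕ)+1), (p*2).choose k := by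
    intro j
    have hsub2 : t j ⊆ (Finset.range (2^(j:ℕ)+1)).biUnion
        (fun k => Finset.powersetCard k (Finset.univ : Finset (Fin p × Bool))) := by
      intro s hs
      simp only [ht, Finset.mem_filter, Finset.mem_univ, true_and] at hs
      rw [Finset.mem_biUnion]
      exact ⟨s.card, Finset.mem_range.mpr (by omega),
        Finset.mem_powersetCard.mpr ⟨Finset.subset_univ s, rfl⟩⟩
    calc (t j).card ≤ _ := Finset.card_le_card hsub2
      _ ≤ ∑ k ∈ Finset.range (2^(j:ℕ)+1),
          (Finset.powersetCard k (Finset.univ : Finset (Fin p × Bool))).card :=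
        Finset.card_biUnion_le
      _ = ∑ k ∈ Finset.range (2^(j:ℕ)+1), (p*2).choose k := by
        apply Finset.sum_congr rfl
        intro k _
        rw [Finset.card_powersetCard]
        congr 1
        simp [Finset.card_univ]
  calc S.ncard = (Φ '' S).ncard := (Set.ncard_image_of_injOn hΦinj).symm
    _ ≤ (↑Tf : Set _).ncard := Set.ncard_le_ncard hsub Tf.finite_toSet
    _ = Tf.card := Set.ncard_coe_finset Tf
    _ = ∏ j : Fin (l+1), (t j).card := Fintype.card_piFinset t
    _ ≤ ∏ j : Fin (l+1), ∑ k ∈ Finset.range (2^(j:ℕ)+1), (p*2).choose k :=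
        Finset.prod_le_prod' (fun j _ => factor_le j)
    _ = ∏ j ∈ Finset.range (l+1), ∑ k ∈ Finset.range (2^j+1), (p*2).choose k :=
        Fin.prod_univ_eq_prod_range (fun j => ∑ k ∈ Finset.range (2^j+1), (p*2).choose k) (l+1)

lemma sum_aux (m : ℕ) : ∀ l : ℕ,
    (∑ j ∈ Finset.range (l+1), (2:ℝ)^j * ((m:ℝ)+4-j)) ≤ 2^(l+1) * ((m:ℝ)+5-l)
  | 0 => by
      have h0 : (0:ℝ) ≤ m := Nat.cast_nonneg m
      norm_num [Finset.sum_range_one]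
      nlinarith
  | (l+1) => by
      rw [Finset.sum_range_succ]
      have ih := sum_aux m l
      have e1 : (2:ℝ)^(l+1+1) = 2 * 2^(l+1) := by ring
      push_cast
      push_cast at ih
      nlinarith [ih, e1]

lemma logB_le (m p j : ℕ) (hj : j ≤ m + 3) (hp : p ≤ 2^m) :
    Real.log (Real.exp ((2^j : ℕ):ℝ) *
        (max 1 (((p*2 : ℕ):ℝ)/((2^j : ℕ):ℝ)))^(2^j)) ≤
      (2:ℝ)^j * ((m:ℝ)+4-j) := by
  have h2j : ((2^j:ℕ):ℝ) = (2:ℝ)^j := by push_cast; ring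
  have hpow0 : (0:ℝ) < (2:ℝ)^j := by positivity
  set M := max 1 (((p*2:ℕ):ℝ)/((2^j:ℕ):ℝ)) with hM
  have hM1 : (1:ℝ) ≤ M := le_max_left _ _
  have hlog : Real.log (Real.exp ((2^j:ℕ):ℝ) * M^(2^j)) =
      (2:ℝ)^j + (2:ℝ)^j * Real.log M := by
    rw [Real.log_mul (Real.exp_ne_zero _) (by positivity), Real.log_exp, Real.log_pow, h2j]
  rw [hlog]
  have hjR : (j:ℝ) ≤ (m:ℝ)+3 := by exact_mod_cast hj
  rcases le_or_gt (((p*2:ℕ):ℝ)/((2^j:ℕ):ℝ)) 1 with h | h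
  · rw [hM, max_eq_left h, Real.log_one]
    nlinarith
  · have hMeq : M = ((p*2:ℕ):ℝ)/((2^j:ℕ):ℝ) := max_eq_right h.le
    have h2jpos : (0:ℝ) < ((2^j:ℕ):ℝ) := by rw [h2j]; positivity
    have hlt : (2:ℕ)^j < p*2 := by
      by_contra hcon
      push_neg at hcon
      have hc : (((p*2:ℕ)):ℝ) ≤ ((2^j:ℕ):ℝ) := by exact_mod_cast hcon
      have : (((p*2:ℕ)):ℝ)/((2^j:ℕ):ℝ) ≤ 1 := by
        rw [div_le_one h2jpos]; exact hc
      linarith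
    have hle : p*2 ≤ 2^(m+1) := by
      have : 2^m * 2 = 2^(m+1) := by ring
      omega
    have hjm : j ≤ m := by
      have h2 : (2:ℕ)^j < 2^(m+1) := lt_of_lt_of_le hlt hle
      have := (Nat.pow_lt_pow_iff_right (by norm_num : 1 < 2)).mp h2
      omega
    have hppos : (0:ℝ) < ((p*2:ℕ):ℝ) := by
      have h0 : 0 < (2:ℕ)^j := pow_pos (by norm_num) j
      have : 0 < p*2 := by omega
      exact_mod_cast this
    have hlogM : Real.log M ≤ ((m:ℝ)+1-j) * Real.log 2 := by
      rw [hMeq, Real.log_div (ne_of_gt hppos) (ne_of_gt h2jpos), h2j, Real.log_pow]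
      have hcast : ((p*2:ℕ):ℝ) ≤ (2:ℝ)^(m+1) := by
        have := hle
        push_cast
        calc ((p:ℝ))*2 ≤ (2:ℝ)^m * 2 := by
              have : (p:ℝ) ≤ (2:ℝ)^m := by exact_mod_cast hp
              linarith
          _ = (2:ℝ)^(m+1) := by ring
      have hlogp : Real.log ((p*2:ℕ):ℝ) ≤ Real.log ((2:ℝ)^(m+1)) :=
        Real.log_le_log hppos hcast
      rw [Real.log_pow] at hlogp
      push_cast at hlogp ⊢
      linarith
    have hlog2 : Real.log 2 ≤ 1 := by
      nlinarith [Real.log_le_sub_one_of_pos (by norm_num : (0:ℝ) < 2)]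
    have hlog2' : (0:ℝ) < Real.log 2 := Real.log_pos (by norm_num)
    have hjm' : (0:ℝ) ≤ (m:ℝ)+1-j := by
      have : (j:ℝ) ≤ (m:ℝ) := by exact_mod_cast hjm
      linarith
    have hMle : Real.log M ≤ (m:ℝ)+1-j := le_trans hlogM (by nlinarith)
    nlinarith [hpow0, hMle]

theorem stmt6 : ∃ C > (0:ℝ), ∀ p : ℕ, ∀ l : ℕ, l ≤ Nat.clog 2 p + 3 →
    Real.log ((Set.ncard (latalaProj p l '' latalaNet p) : ℝ)) ≤
      C * ((Nat.clog 2 p : ℝ) + 4 - l) * 2 ^ l := by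
  refine ⟨4, by norm_num, ?_⟩
  intro p l hl
  set m := Nat.clog 2 p with hm
  have hlm : (l:ℝ) ≤ (m:ℝ) + 3 := by exact_mod_cast hl
  have hpowl : (0:ℝ) < 2^l := by positivity
  rcases Nat.eq_zero_or_pos (Set.ncard (latalaProj p l '' latalaNet p)) with h0 | hpos
  · rw [h0]
    norm_num
    nlinarith
  · have hp2m : p ≤ 2^m := Nat.le_pow_clog one_lt_two p
    have h1 : ((Set.ncard (latalaProj p l '' latalaNet p)):ℝ) ≤
        ∏ j ∈ Finset.range (l+1), (Real.exp ((2^j:ℕ):ℝ) *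
          (max 1 (((p*2:ℕ):ℝ)/((2^j:ℕ):ℝ)))^(2^j)) := by
      calc ((Set.ncard (latalaProj p l '' latalaNet p)):ℝ)
          ≤ ((∏ j ∈ Finset.range (l+1), ∑ k ∈ Finset.range (2^j+1), (p*2).choose k : ℕ):ℝ) :=
            Nat.cast_le.mpr (card_bound p l)
        _ = ∏ j ∈ Finset.range (l+1),
              ((∑ k ∈ Finset.range (2^j+1), (p*2).choose k : ℕ):ℝ) := Nat.cast_prod _ _
        _ ≤ _ := Finset.prod_le_prod (fun j _ => Nat.cast_nonneg _)
            (fun j _ => sum_choose_le (p*2) (2^j) Nat.one_le_two_pow)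
    have h2 : Real.log ((Set.ncard (latalaProj p l '' latalaNet p)):ℝ) ≤
        ∑ j ∈ Finset.range (l+1), Real.log (Real.exp ((2^j:ℕ):ℝ) *
          (max 1 (((p*2:ℕ):ℝ)/((2^j:ℕ):ℝ)))^(2^j)) := by
      calc Real.log ((Set.ncard (latalaProj p l '' latalaNet p)):ℝ)
          ≤ Real.log (∏ j ∈ Finset.range (l+1), (Real.exp ((2^j:ℕ):ℝ) *
              (max 1 (((p*2:ℕ):ℝ)/((2^j:ℕ):ℝ)))^(2^j))) :=
            Real.log_le_log (by exact_mod_cast hpos) h1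
        _ = _ := Real.log_prod (fun j _ => by positivity)
    have h3 : ∑ j ∈ Finset.range (l+1), Real.log (Real.exp ((2^j:ℕ):ℝ) *
          (max 1 (((p*2:ℕ):ℝ)/((2^j:ℕ):ℝ)))^(2^j)) ≤
        ∑ j ∈ Finset.range (l+1), (2:ℝ)^j * ((m:ℝ)+4-j) := by
      apply Finset.sum_le_sum
      intro j hj
      have hjl : j ≤ l := by
        have := Finset.mem_range.mp hj; omega
      exact logB_le m p j (by omega) hp2m
    have h4 := sum_aux m l
    have h5 : (2:ℝ)^(l+1) * ((m:ℝ)+5-l) ≤ 4 * ((m:ℝ) + 4 - l) * 2 ^ l := by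
      have e1 : (2:ℝ)^(l+1) = 2 * 2^l := by ring
      nlinarith [hpowl, hlm, e1]
    linarith [h2, h3, h4, h5]
end

section
/- Suppose a multi-labeling of an l-graph has d_1, ..., d_l n-labels on its first through l-th n-vertices, and m total distinct labels (counting p-labels and n-labels as distinct types). Then m ≤ (l + Σ_{s=1}^l d_s)/2 + 1. -/
open Finset

/-- Number of edges of the `l`-graph cycle whose `p`-vertex endpoint has label `i`
and whose `n`-vertex endpoint contains `j` in its label tuple. The `s`-th `n`-vertex
sits between the `s`-th and `(s+1)`-th `p`-vertices. -/
def edgeCount {l : ℕ} [NeZero l] (pl : Fin l → ℕ) (nl : Fin l → Finset ℕ) (i j : ℕ) : ℕ :=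
  ∑ s : Fin l, ((if pl s = i ∧ j ∈ nl s then 1 else 0) +
    (if pl (s + 1) = i ∧ j ∈ nl s then 1 else 0))

/-- A multi-labeling of the `l`-graph (a cycle alternating between `l` `p`-vertices and
`l` `n`-vertices): each `p`-vertex gets a label, each `n`-vertex gets a set of between
1 and `D` distinct labels; consecutive `p`-vertices have distinct labels, and every
edge count `b_{ij}` is even. -/
def IsMultiLabeling (l D : ℕ) [NeZero l] (pl : Fin l → ℕ) (nl : Fin l → Finset ℕ) : Prop :=
  (∀ s : Fin l, pl s ≠ pl (s + 1)) ∧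
  (∀ s : Fin l, 1 ≤ (nl s).card ∧ (nl s).card ≤ D) ∧
  (∀ i j : ℕ, Even (edgeCount pl nl i j))

/-- `N_j`: the number of `n`-vertices whose label tuple contains `j`. -/
def nLabelCount {l : ℕ} (nl : Fin l → Finset ℕ) (j : ℕ) : ℕ :=
  (Finset.univ.filter fun s => j ∈ nl s).card

/-- `m`: the total number of distinct `p`-labels plus distinct `n`-labels. -/
def distinctLabels {l : ℕ} (pl : Fin l → ℕ) (nl : Fin l → Finset ℕ) : ℕ :=
  (Finset.univ.image pl).card + (Finset.univ.biUnion nl).card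

/-- The excess `Δ = (l + Σ_s d_s)/2 + 1 − m` of a multi-labeling. -/
noncomputable def excess {l : ℕ} (pl : Fin l → ℕ) (nl : Fin l → Finset ℕ) : ℝ :=
  ((l : ℝ) + ∑ s : Fin l, ((nl s).card : ℝ)) / 2 + 1 - distinctLabels pl nl

def xvec {l : ℕ} [NeZero l] (pl : Fin l → ℕ) (i : ℕ) : Fin l → ZMod 2 :=
  fun s => (if pl s = i then 1 else 0) + (if pl (s + 1) = i then 1 else 0)

def yvec {l : ℕ} (nl : Fin l → Finset ℕ) (j : ℕ) : Fin l → ZMod 2 :=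
  fun s => if j ∈ nl s then 1 else 0

lemma orth {l : ℕ} [NeZero l] (pl : Fin l → ℕ) (nl : Fin l → Finset ℕ)
    (hev : ∀ i j, Even (edgeCount pl nl i j)) (i j : ℕ) :
    ∑ s : Fin l, xvec pl i s * yvec nl j s = 0 := by
  have h1 : ∑ s : Fin l, xvec pl i s * yvec nl j s = ((edgeCount pl nl i j : ℕ) : ZMod 2) := by
    rw [edgeCount]
    push_cast
    apply Finset.sum_congr rfl
    intro s _
    unfold xvec yvec
    split_ifs with h1 h2 h3 h4 h5 h6 h7 h8 h9 <;> simp_all <;> ring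
  rw [h1, ZMod.natCast_eq_zero_iff]
  exact (hev i j).two_dvd

lemma two_le_nj {l : ℕ} [NeZero l] (pl : Fin l → ℕ) (nl : Fin l → Finset ℕ)
    (hne : ∀ s : Fin l, pl s ≠ pl (s + 1))
    (hev : ∀ i j, Even (edgeCount pl nl i j)) {j : ℕ} {s₀ : Fin l} (hj : j ∈ nl s₀) :
    2 ≤ (Finset.univ.filter fun s => j ∈ nl s).card := by
  by_contra hlt
  push_neg at hlt
  have hs₀ : s₀ ∈ Finset.univ.filter fun s => j ∈ nl s := by simp [hj]
  have huniq : ∀ s, j ∈ nl s → s = s₀ := by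
    intro s hs
    exact Finset.card_le_one.mp (by omega) s (by simp [hs]) s₀ hs₀
  have h1 : edgeCount pl nl (pl s₀) j = 1 := by
    rw [edgeCount, Finset.sum_eq_single s₀]
    · simp [hj, (hne s₀).symm]
    · intro s _ hss
      have hns : j ∉ nl s := fun hc => hss (huniq s hc)
      simp [hns]
    · simp
  have h2 := hev (pl s₀) j
  rw [h1] at h2
  simp at h2

lemma xvec_indep {l : ℕ} [NeZero l] (pl : Fin l → ℕ) :
    LinearIndependent (ZMod 2)
      (fun i : ↥((Finset.univ.image pl).erase (pl 0)) => xvec pl i.val) := by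
  classical
  set F := (Finset.univ.image pl).erase (pl 0) with hF
  rw [Fintype.linearIndependent_iff]
  intro c hc
  by_contra hcon
  push_neg at hcon
  obtain ⟨i₁, hi₁⟩ := hcon
  set cc : ℕ → ZMod 2 := fun a => if h : a ∈ F then c ⟨a, h⟩ else 0 with hcc
  have hstep : ∀ s : Fin l, cc (pl s) + cc (pl (s + 1)) = 0 := by
    intro s
    have h0 : ∑ i : ↥F, c i • xvec pl i.val s = 0 := by
      have := congrFun hc s
      rw [Finset.sum_apply] at this
      simpa using this
    have h1 : ∑ i : ↥F, c i • xvec pl i.val s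
        = ∑ a ∈ F, cc a * xvec pl a s := by
      rw [← Finset.sum_attach F (fun a => cc a * xvec pl a s), Finset.univ_eq_attach]
      apply Finset.sum_congr rfl
      intro i _
      rw [hcc]
      simp only [smul_eq_mul]
      rw [dif_pos i.2]
    rw [h1] at h0
    have h2 : ∑ a ∈ F, cc a * xvec pl a s
        = (if pl s ∈ F then cc (pl s) else 0) + (if pl (s+1) ∈ F then cc (pl (s+1)) else 0) := by
      unfold xvec
      simp only [mul_add, Finset.sum_add_distrib, mul_ite, mul_one, mul_zero]
      congr 1
      · rw [← Finset.sum_ite_eq F (pl s) cc]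
      · rw [← Finset.sum_ite_eq F (pl (s+1)) cc]
    rw [h2] at h0
    have e1 : (if pl s ∈ F then cc (pl s) else 0) = cc (pl s) := by
      by_cases hm : pl s ∈ F <;> simp [hm, hcc]
    have e2 : (if pl (s+1) ∈ F then cc (pl (s+1)) else 0) = cc (pl (s+1)) := by
      by_cases hm : pl (s+1) ∈ F <;> simp [hm, hcc]
    rw [e1, e2] at h0
    exact h0
  have heq : ∀ s : Fin l, cc (pl (s + 1)) = cc (pl s) := by
    intro s
    have := hstep s
    have h2 : cc (pl (s+1)) = - cc (pl s) := by linear_combination this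
    rw [h2]
    exact (CharTwo.neg_eq _)
  open Fin.NatCast in
  have hnat : ∀ n : ℕ, cc (pl ((n : Fin l))) = cc (pl 0) := by
    intro n
    induction n with
    | zero => norm_num
    | succ n ih =>
      have : ((n + 1 : ℕ) : Fin l) = (n : Fin l) + 1 := by push_cast; ring
      rw [this, heq, ih]
  have hall : ∀ s : Fin l, cc (pl s) = cc (pl 0) := by
    intro s
    have := hnat s.val
    rwa [Fin.cast_val_eq_self] at this
  have hz : cc (pl 0) = 0 := by
    rw [hcc]
    simp only []
    rw [dif_neg]
    simp [hF]
  -- i₁.val ∈ F hence in image pl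
  obtain ⟨s₁, _, hs₁⟩ := Finset.mem_image.mp (Finset.mem_of_mem_erase i₁.2)
  have : cc (i₁.val) = c i₁ := by rw [hcc]; simp only []; rw [dif_pos i₁.2]
  rw [← hs₁, hall s₁, hz] at this
  exact hi₁ this.symm

lemma base_case {l : ℕ} [NeZero l] (pl : Fin l → ℕ) (nl : Fin l → Finset ℕ)
    (hev : ∀ i j, Even (edgeCount pl nl i j))
    (hind : LinearIndependent (ZMod 2)
      (fun j : ↥(Finset.univ.biUnion nl) => yvec nl j.val)) :
    (Finset.univ.image pl).card + (Finset.univ.biUnion nl).card ≤ l + 1 := by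
  classical
  set F := (Finset.univ.image pl).erase (pl 0) with hF
  let M : Matrix ↥F (Fin l) (ZMod 2) := Matrix.of (fun i s => xvec pl i.val s)
  have hrank : M.rank = F.card := by
    rw [← Matrix.rank_transpose, Matrix.rank, Matrix.range_mulVecLin,
      Matrix.col_transpose]
    change Module.finrank (ZMod 2) (Submodule.span (ZMod 2) (Set.range M)) = F.card
    have he : Set.range M = Set.range (fun i : ↥F => xvec pl i.val) := rfl
    rw [he, finrank_span_eq_card (xvec_indep pl), Fintype.card_coe]
  have hker : ∀ j : ↥(Finset.univ.biUnion nl), yvec nl j.val ∈ LinearMap.ker M.mulVecLin := by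
    intro j
    rw [LinearMap.mem_ker]
    funext i
    rw [Matrix.mulVecLin_apply]
    show M.mulVec (yvec nl j.val) i = 0
    rw [Matrix.mulVec]
    show ∑ s, M i s * yvec nl j.val s = 0
    exact orth pl nl hev i.val j.val
  have hspan : Submodule.span (ZMod 2)
      (Set.range fun j : ↥(Finset.univ.biUnion nl) => yvec nl j.val)
      ≤ LinearMap.ker M.mulVecLin := by
    rw [Submodule.span_le]
    rintro _ ⟨j, rfl⟩
    exact hker j
  have hn : (Finset.univ.biUnion nl).card
      ≤ Module.finrank (ZMod 2) (LinearMap.ker M.mulVecLin) := by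
    rw [← Fintype.card_coe, ← finrank_span_eq_card hind]
    exact Submodule.finrank_mono hspan
  have hrn := LinearMap.finrank_range_add_finrank_ker M.mulVecLin
  rw [Module.finrank_pi] at hrn
  rw [← Matrix.rank] at hrn
  have hFc : F.card + 1 = (Finset.univ.image pl).card := by
    rw [hF, Finset.card_erase_of_mem (Finset.mem_image_of_mem pl (Finset.mem_univ 0))]
    have : 1 ≤ (Finset.univ.image pl).card :=
      Finset.card_pos.mpr ⟨pl 0, Finset.mem_image_of_mem pl (Finset.mem_univ 0)⟩
    omega
  rw [Fintype.card_fin] at hrn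
  omega

lemma key (l D : ℕ) [NeZero l] (pl : Fin l → ℕ) :
    ∀ (k : ℕ) (nl : Fin l → Finset ℕ), (∑ s : Fin l, (nl s).card) = k →
      IsMultiLabeling l D pl nl →
      2 * distinctLabels pl nl ≤ l + (∑ s : Fin l, (nl s).card) + 2 := by
  classical
  intro k
  induction k using Nat.strong_induction_on with
  | _ k ih =>
  intro nl hk hml
  obtain ⟨hne, hcard, hev⟩ := hml
  have hlsum : l ≤ ∑ s : Fin l, (nl s).card := by
    calc l = ∑ _s : Fin l, 1 := by simp
    _ ≤ ∑ s : Fin l, (nl s).card := Finset.sum_le_sum (fun s _ => (hcard s).1)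
  by_cases hind : LinearIndependent (ZMod 2)
      (fun j : ↥(Finset.univ.biUnion nl) => yvec nl j.val)
  · have := base_case pl nl hev hind
    rw [distinctLabels]
    omega
  · rw [Fintype.not_linearIndependent_iff] at hind
    obtain ⟨g, hg0, j, hgj⟩ := hind
    have hj1 : g j = 1 := by
      have : ∀ a : ZMod 2, a ≠ 0 → a = 1 := by decide
      exact this _ hgj
    -- for every n-vertex containing j.val there is another label
    have hother : ∀ s : Fin l, j.val ∈ nl s → ∃ a ∈ nl s, a ≠ j.val := by
      intro s hs
      have hsum : ∑ i : ↥(Finset.univ.biUnion nl), g i * yvec nl i.val s = 0 := by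
        have := congrFun hg0 s
        rw [Finset.sum_apply] at this
        simpa using this
      rw [← Finset.add_sum_erase _ _ (Finset.mem_univ j)] at hsum
      have hjterm : g j * yvec nl j.val s = 1 := by
        rw [hj1, one_mul, yvec]
        simp [hs]
      rw [hjterm] at hsum
      have hrest : ∑ i ∈ Finset.univ.erase j, g i * yvec nl i.val s ≠ 0 := by
        intro h0
        rw [h0, add_zero] at hsum
        exact one_ne_zero hsum
      obtain ⟨i, hmem, hine⟩ := Finset.exists_ne_zero_of_sum_ne_zero hrest
      refine ⟨i.val, ?_, ?_⟩
      · by_contra hnot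
        apply hine
        rw [yvec]
        simp [hnot]
      · intro heq
        exact (Finset.mem_erase.mp hmem).1 (Subtype.ext heq)
    set nl' : Fin l → Finset ℕ := fun s => (nl s).erase j.val with hnl'
    set Nj := (Finset.univ.filter fun s => j.val ∈ nl s).card with hNj
    -- sum relation
    have hsum' : (∑ s : Fin l, (nl' s).card) + Nj = ∑ s : Fin l, (nl s).card := by
      rw [hNj, Finset.card_filter, ← Finset.sum_add_distrib]
      apply Finset.sum_congr rfl
      intro s _
      by_cases hs : j.val ∈ nl s
      · rw [hnl']
        simp only [hs, if_pos]
        rw [Finset.card_erase_of_mem hs]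
        have : 1 ≤ (nl s).card := (hcard s).1
        have h2 : j.val ∈ nl s := hs
        have hpos : 0 < (nl s).card := Finset.card_pos.mpr ⟨_, hs⟩
        omega
      · rw [hnl']
        simp [hs, Finset.erase_eq_of_notMem hs]
    -- j appears somewhere
    obtain ⟨s₀, -, hjs₀⟩ := Finset.mem_biUnion.mp j.2
    have hNj2 : 2 ≤ Nj := two_le_nj pl nl hne hev hjs₀
    -- new multilabeling
    have hml' : IsMultiLabeling l D pl nl' := by
      refine ⟨hne, ?_, ?_⟩
      · intro s
        constructor
        · by_cases hs : j.val ∈ nl s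
          · obtain ⟨a, ha, hane⟩ := hother s hs
            exact Finset.card_pos.mpr ⟨a, Finset.mem_erase.mpr ⟨hane, ha⟩⟩
          · rw [hnl']
            simp only [Finset.erase_eq_of_notMem hs]
            exact (hcard s).1
        · exact le_trans (Finset.card_erase_le) (hcard s).2
      · intro i j''
        by_cases hjj : j'' = j.val
        · have : edgeCount pl nl' i j'' = 0 := by
            rw [edgeCount]
            apply Finset.sum_eq_zero
            intro s _
            rw [hjj]
            simp [hnl']
          rw [this]
          exact Even.zero
        · have : edgeCount pl nl' i j'' = edgeCount pl nl i j'' := by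
            rw [edgeCount, edgeCount]
            apply Finset.sum_congr rfl
            intro s _
            have hiff : j'' ∈ nl' s ↔ j'' ∈ nl s := by
              rw [hnl']
              simp [hjj]
            simp only [hiff]
          rw [this]
          exact hev i j''
    -- biUnion relation
    have hbi : Finset.univ.biUnion nl' = (Finset.univ.biUnion nl).erase j.val := by
      ext a
      simp only [Finset.mem_biUnion, Finset.mem_erase, hnl', Finset.mem_erase]
      constructor
      · rintro ⟨s, -, hane, ha⟩
        exact ⟨hane, s, Finset.mem_univ s, ha⟩
      · rintro ⟨hane, s, -, ha⟩
        exact ⟨s, Finset.mem_univ s, hane, ha⟩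
    have hm' : distinctLabels pl nl' + 1 = distinctLabels pl nl := by
      rw [distinctLabels, distinctLabels, hbi, Finset.card_erase_of_mem j.2]
      have : 1 ≤ (Finset.univ.biUnion nl).card := Finset.card_pos.mpr ⟨j.val, j.2⟩
      omega
    have hlt : (∑ s : Fin l, (nl' s).card) < k := by omega
    have := ih _ hlt nl' rfl hml'
    omega


theorem stmt11 (l D : ℕ) [NeZero l] (hl : 2 ≤ l)
    (pl : Fin l → ℕ) (nl : Fin l → Finset ℕ)
    (h : IsMultiLabeling l D pl nl) :
    (distinctLabels pl nl : ℝ) ≤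
      ((l : ℝ) + ∑ s : Fin l, ((nl s).card : ℝ)) / 2 + 1 := by
  have hkey := key l D pl (∑ s : Fin l, (nl s).card) nl rfl h
  have hc : ((∑ s : Fin l, (nl s).card : ℕ) : ℝ) = ∑ s : Fin l, ((nl s).card : ℝ) := by
    push_cast
    rfl
  rw [← hc]
  have h2 : (2 * distinctLabels pl nl : ℝ)
      ≤ ((l : ℕ) : ℝ) + ((∑ s : Fin l, (nl s).card : ℕ) : ℝ) + 2 := by
    exact_mod_cast hkey
  linarith
end

section
/- Suppose a simple-labeling of an l-graph has k̃ n-vertices with non-empty label and m̃ total distinct p-labels and distinct non-empty n-labels. Then m̃ ≤ (l + k̃)/2 + 1. -/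
open Finset

/-- A simple-labeling of the `l`-graph: each `p`-vertex gets a label, each `n`-vertex
gets either one label (`some j`) or the empty label (`none`); consecutive `p`-vertices
have distinct labels; for each `(i, j)` the number of edges with `p`-endpoint labeled `i`
and `n`-endpoint labeled `j` is even; and for distinct `i, i'` the number of consecutive
triples `(i, ∅, i')` equals the number of triples `(i', ∅, i)`. -/
def IsSimpleLabeling (l : ℕ) [NeZero l] (pl : Fin l → ℕ) (nl : Fin l → Option ℕ) : Prop :=
  (∀ s : Fin l, pl s ≠ pl (s + 1)) ∧
  (∀ i j : ℕ, Even (∑ s : Fin l,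
    ((if pl s = i ∧ nl s = some j then 1 else 0) +
      (if pl (s + 1) = i ∧ nl s = some j then 1 else 0)))) ∧
  (∀ i i' : ℕ, i ≠ i' →
    (Finset.univ.filter fun s : Fin l => pl s = i ∧ nl s = none ∧ pl (s + 1) = i').card =
      (Finset.univ.filter fun s : Fin l => pl s = i' ∧ nl s = none ∧ pl (s + 1) = i).card)


lemma connected_card_le_aux {V : Type} [Fintype V] :
    ∀ (n : ℕ) (G : SimpleGraph V) [Fintype G.edgeSet], G.edgeFinset.card ≤ n →
      G.Connected → Fintype.card V ≤ G.edgeFinset.card + 1 := by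
  intro n
  induction n with
  | zero =>
    intro G _ hcard hconn
    by_cases hac : G.IsAcyclic
    · exact le_of_eq ((SimpleGraph.IsTree.card_edgeFinset ⟨hconn, hac⟩).symm)
    · exfalso
      rw [SimpleGraph.IsAcyclic] at hac
      push_neg at hac
      obtain ⟨v, c, hc⟩ := hac
      have hne : c.edges ≠ [] := by
        intro h0
        have := hc.ne_nil
        have : c.length = 0 := by
          have := congrArg List.length h0
          simpa [SimpleGraph.Walk.length_edges] using this
        exact hc.ne_nil (SimpleGraph.Walk.nil_iff_length_eq.mpr this).eq_nil -- guess
      obtain ⟨e, he⟩ := List.exists_mem_of_ne_nil _ hne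
      have : e ∈ G.edgeFinset := by
        rw [SimpleGraph.mem_edgeFinset]
        exact c.edges_subset_edgeSet he
      have : 0 < G.edgeFinset.card := Finset.card_pos.mpr ⟨e, this⟩
      omega
  | succ n ih =>
    intro G _ hcard hconn
    classical
    by_cases hac : G.IsAcyclic
    · exact le_of_eq ((SimpleGraph.IsTree.card_edgeFinset ⟨hconn, hac⟩).symm)
    · rw [SimpleGraph.IsAcyclic] at hac
      push_neg at hac
      obtain ⟨v, c, hc⟩ := hac
      have hne : c.edges ≠ [] := by
        intro h0
        have hl0 : c.length = 0 := by
          have := congrArg List.length h0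
          simpa [SimpleGraph.Walk.length_edges] using this
        exact hc.ne_nil (SimpleGraph.Walk.nil_iff_length_eq.mpr hl0).eq_nil
      obtain ⟨e, he⟩ := List.exists_mem_of_ne_nil _ hne
      induction e using Sym2.ind with
      | _ u w =>
      have hkey := (G.adj_and_reachable_delete_edges_iff_exists_cycle).mpr ⟨v, c, hc, he⟩
      set G' := G \ SimpleGraph.fromEdgeSet {s(u, w)} with hG'
      have huw : G.Adj u w := hkey.1
      have hreach : ∀ a b : V, G.Reachable a b → G'.Reachable a b := by
        intro a b ⟨p⟩
        induction p with
        | nil => exact SimpleGraph.Reachable.refl _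
        | @cons x y z h q ihq =>
          refine SimpleGraph.Reachable.trans ?_ ihq
          by_cases hxy : s(x, y) = s(u, w)
          · rw [Sym2.eq_iff] at hxy
            rcases hxy with ⟨rfl, rfl⟩ | ⟨rfl, rfl⟩
            · exact hkey.2
            · exact hkey.2.symm
          · exact SimpleGraph.Adj.reachable (by
              rw [hG']
              simp only [SimpleGraph.sdiff_adj, SimpleGraph.fromEdgeSet_adj]
              refine ⟨h, ?_⟩
              simp only [Set.mem_singleton_iff]
              tauto)
      have hconn' : G'.Connected := by
        haveI := hconn.nonempty
        exact ⟨fun a b => hreach a b (hconn.preconnected a b)⟩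
      haveI : Fintype G'.edgeSet := Fintype.ofFinite _
      have hE' : G'.edgeFinset = G.edgeFinset.erase s(u, w) := by
        ext e'
        simp only [SimpleGraph.mem_edgeFinset, Finset.mem_erase]
        rw [hG']
        rw [SimpleGraph.edgeSet_sdiff, SimpleGraph.edgeSet_fromEdgeSet,
          SimpleGraph.edgeSet_sdiff_sdiff_isDiag]
        simp [and_comm]
      have hmem : s(u, w) ∈ G.edgeFinset := by
        rw [SimpleGraph.mem_edgeFinset]; exact huw
      have hcard' : G'.edgeFinset.card ≤ n := by
        rw [hE', Finset.card_erase_of_mem hmem]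
        omega
      have := ih G' hcard' hconn'
      have h1 : 1 ≤ G.edgeFinset.card := Finset.card_pos.mpr ⟨_, hmem⟩
      rw [hE', Finset.card_erase_of_mem hmem] at this
      omega

section
set_option linter.unusedSectionVars false
variable (l : ℕ) [NeZero l] (pl : Fin l → ℕ) (nl : Fin l → Option ℕ)

def suppAt (s : Fin l) (x y : ℕ ⊕ ℕ) : Prop :=
  (nl s = none ∧ ((x = .inl (pl s) ∧ y = .inl (pl (s+1))) ∨
                  (y = .inl (pl s) ∧ x = .inl (pl (s+1))))) ∨
  (∃ j, nl s = some j ∧ ((x = .inr j ∧ (y = .inl (pl s) ∨ y = .inl (pl (s+1)))) ∨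
                         (y = .inr j ∧ (x = .inl (pl s) ∨ x = .inl (pl (s+1))))))

lemma suppAt_symm (s : Fin l) (x y : ℕ ⊕ ℕ) :
    suppAt l pl nl s x y = suppAt l pl nl s y x := by
  unfold suppAt
  apply propext
  constructor <;>
    (rintro (⟨a1, a2⟩ | ⟨j, a1, a2⟩); exacts [Or.inl ⟨a1, a2.symm⟩, Or.inr ⟨j, a1, a2.symm⟩])

def auxS : Finset (ℕ ⊕ ℕ) :=
  (univ.image pl).image Sum.inl ∪ (univ.biUnion fun s => (nl s).toFinset).image Sum.inr

def auxG : SimpleGraph ↥(auxS l pl nl) where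
  Adj a b := a.val ≠ b.val ∧ ∃ s, suppAt l pl nl s a.val b.val
  symm := by
    refine ⟨?_⟩; rintro a b ⟨a1, s, a2⟩
    exact ⟨a1.symm, s, (suppAt_symm l pl nl s a.val b.val) ▸ a2⟩
  loopless := ⟨fun a h => h.1 rfl⟩

lemma mem_auxS_inl (s : Fin l) : Sum.inl (pl s) ∈ auxS l pl nl :=
  Finset.mem_union_left _ (Finset.mem_image_of_mem _
    (Finset.mem_image_of_mem _ (Finset.mem_univ s)))

lemma mem_auxS_inr {s : Fin l} {j : ℕ} (hj : nl s = some j) : Sum.inr j ∈ auxS l pl nl :=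
  Finset.mem_union_right _ (Finset.mem_image_of_mem _
    (Finset.mem_biUnion.mpr ⟨s, Finset.mem_univ s, by simp [hj]⟩))

open Classical in
noncomputable def suppSet (e : Sym2 ↥(auxS l pl nl)) : Finset (Fin l) :=
  univ.filter (fun s => Sym2.lift ⟨fun a b => suppAt l pl nl s a.val b.val,
    fun a b => suppAt_symm l pl nl s a.val b.val⟩ e)

lemma mem_suppSet {s : Fin l} {a b : ↥(auxS l pl nl)} :
    s ∈ suppSet l pl nl s(a, b) ↔ suppAt l pl nl s a.val b.val := by
  classical
  unfold suppSet; rw [Finset.mem_filter]; simp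

lemma card_filter_mem_suppSet_le [Fintype ↥(auxG l pl nl).edgeSet] (s : Fin l) :
    (((auxG l pl nl).edgeFinset).filter (fun e => s ∈ suppSet l pl nl e)).card ≤
      if nl s = none then 1 else 2 := by
  classical
  cases hns : nl s with
  | none =>
    have hsub : ((auxG l pl nl).edgeFinset).filter (fun e => s ∈ suppSet l pl nl e) ⊆
        {s(⟨Sum.inl (pl s), mem_auxS_inl l pl nl s⟩,
           ⟨Sum.inl (pl (s+1)), mem_auxS_inl l pl nl (s+1)⟩)} := by
      intro e he
      rw [Finset.mem_filter] at he
      obtain ⟨-, hesupp⟩ := he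
      revert hesupp
      induction e using Sym2.ind with
      | _ a b =>
      intro hesupp
      rw [mem_suppSet] at hesupp
      rcases hesupp with ⟨-, ⟨ha, hb⟩ | ⟨hb, ha⟩⟩ | ⟨j, hj, -⟩
      · rw [Finset.mem_singleton, Sym2.eq_iff]
        exact Or.inl ⟨Subtype.ext ha, Subtype.ext hb⟩
      · rw [Finset.mem_singleton, Sym2.eq_iff]
        exact Or.inr ⟨Subtype.ext ha, Subtype.ext hb⟩
      · rw [hns] at hj; exact absurd hj (by simp)
    simp only [if_pos rfl]
    exact (Finset.card_le_card hsub).trans (by simp)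
  | some j =>
    have hj' : Sum.inr j ∈ auxS l pl nl := mem_auxS_inr l pl nl hns
    have hsub : ((auxG l pl nl).edgeFinset).filter (fun e => s ∈ suppSet l pl nl e) ⊆
        {s(⟨Sum.inr j, hj'⟩, ⟨Sum.inl (pl s), mem_auxS_inl l pl nl s⟩),
         s(⟨Sum.inr j, hj'⟩, ⟨Sum.inl (pl (s+1)), mem_auxS_inl l pl nl (s+1)⟩)} := by
      intro e he
      rw [Finset.mem_filter] at he
      obtain ⟨-, hesupp⟩ := he
      revert hesupp
      induction e using Sym2.ind with
      | _ a b =>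
      intro hesupp
      rw [mem_suppSet] at hesupp
      rcases hesupp with ⟨hj0, -⟩ | ⟨j0, hj0, hor⟩
      · rw [hns] at hj0; exact absurd hj0 (by simp)
      · rw [hns] at hj0
        have : j0 = j := by injection hj0.symm
        subst this
        simp only [Finset.mem_insert, Finset.mem_singleton, Sym2.eq_iff]
        rcases hor with ⟨ha, hb | hb⟩ | ⟨hb, ha | ha⟩
        exacts [Or.inl (Or.inl ⟨Subtype.ext ha, Subtype.ext hb⟩),
                Or.inr (Or.inl ⟨Subtype.ext ha, Subtype.ext hb⟩),
                Or.inl (Or.inr ⟨Subtype.ext ha, Subtype.ext hb⟩),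
                Or.inr (Or.inr ⟨Subtype.ext ha, Subtype.ext hb⟩)]
    rw [if_neg (by simp)]
    exact (Finset.card_le_card hsub).trans ((Finset.card_insert_le _ _).trans (by simp))


lemma two_le_suppSet (h1 : ∀ s : Fin l, pl s ≠ pl (s + 1))
    (h2 : ∀ i j : ℕ, Even (∑ s : Fin l,
      ((if pl s = i ∧ nl s = some j then 1 else 0) +
        (if pl (s + 1) = i ∧ nl s = some j then 1 else 0))))
    (h3 : ∀ i i' : ℕ, i ≠ i' →
      (Finset.univ.filter fun s : Fin l => pl s = i ∧ nl s = none ∧ pl (s + 1) = i').card =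
        (Finset.univ.filter fun s : Fin l => pl s = i' ∧ nl s = none ∧ pl (s + 1) = i).card)
    (a b : ↥(auxS l pl nl)) (he : (auxG l pl nl).Adj a b) :
    2 ≤ (suppSet l pl nl s(a, b)).card := by
  classical
  obtain ⟨hne, s, hs⟩ := he
  rcases hs with ⟨hnone, hor⟩ | ⟨j, hj, hor⟩
  · -- pp edge
    have hii' : pl s ≠ pl (s+1) := h1 s
    set T1 : Finset (Fin l) :=
      Finset.univ.filter (fun t => pl t = pl s ∧ nl t = none ∧ pl (t + 1) = pl (s+1)) with hT1
    set T2 : Finset (Fin l) :=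
      Finset.univ.filter (fun t => pl t = pl (s+1) ∧ nl t = none ∧ pl (t + 1) = pl s) with hT2
    have hcards : T1.card = T2.card := h3 _ _ hii'
    have hsT1 : s ∈ T1 := by
      rw [hT1, Finset.mem_filter]
      exact ⟨Finset.mem_univ s, rfl, hnone, rfl⟩
    have hdisj : Disjoint T1 T2 := by
      rw [Finset.disjoint_left]
      intro t ht1 ht2
      rw [hT1, Finset.mem_filter] at ht1
      rw [hT2, Finset.mem_filter] at ht2
      exact hii' (ht1.2.1 ▸ ht2.2.1 ▸ rfl)
    have hsub : T1 ∪ T2 ⊆ suppSet l pl nl s(a, b) := by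
      intro t ht
      rw [mem_suppSet]
      unfold suppAt
      rcases Finset.mem_union.mp ht with h' | h' <;>
        · rw [Finset.mem_filter] at h'
          obtain ⟨-, e1, e2, e3⟩ := h'
          left
          refine ⟨e2, ?_⟩
          rw [e1, e3]
          tauto
    calc 2 = 1 + 1 := rfl
      _ ≤ T1.card + T2.card := by
          have : 1 ≤ T1.card := Finset.card_pos.mpr ⟨s, hsT1⟩
          omega
      _ = (T1 ∪ T2).card := (Finset.card_union_of_disjoint hdisj).symm
      _ ≤ _ := Finset.card_le_card hsub
  · -- pn edge
    have key : ∃ i, (pl s = i ∨ pl (s+1) = i) ∧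
        ((a.val = Sum.inr j ∧ b.val = Sum.inl i) ∨ (b.val = Sum.inr j ∧ a.val = Sum.inl i)) := by
      rcases hor with ⟨ha, hb | hb⟩ | ⟨hb, ha | ha⟩
      exacts [⟨pl s, Or.inl rfl, Or.inl ⟨ha, hb⟩⟩, ⟨pl (s+1), Or.inr rfl, Or.inl ⟨ha, hb⟩⟩,
              ⟨pl s, Or.inl rfl, Or.inr ⟨hb, ha⟩⟩, ⟨pl (s+1), Or.inr rfl, Or.inr ⟨hb, ha⟩⟩]
    obtain ⟨i, hio, hab⟩ := key
    set T : Finset (Fin l) :=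
      Finset.univ.filter (fun t => nl t = some j ∧ (pl t = i ∨ pl (t + 1) = i)) with hT
    have hsT : s ∈ T := by
      rw [hT, Finset.mem_filter]
      exact ⟨Finset.mem_univ s, hj, hio⟩
    have hsub : T ⊆ suppSet l pl nl s(a, b) := by
      intro t ht
      rw [hT, Finset.mem_filter] at ht
      obtain ⟨-, htj, hti⟩ := ht
      rw [mem_suppSet]
      unfold suppAt
      right
      refine ⟨j, htj, ?_⟩
      rcases hti with h' | h' <;> rw [h'] <;> tauto
    have hTcard : T.card = ∑ t : Fin l,
        ((if pl t = i ∧ nl t = some j then 1 else 0) +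
          (if pl (t + 1) = i ∧ nl t = some j then 1 else 0)) := by
      rw [hT, Finset.card_filter]
      refine Finset.sum_congr rfl fun t _ => ?_
      have hne' := h1 t
      by_cases c1 : nl t = some j
      · by_cases c2 : pl t = i
        · have c3 : ¬ pl (t+1) = i := fun hc => hne' (c2.trans hc.symm)
          simp [c1, c2, c3]
        · by_cases c3 : pl (t+1) = i
          · simp [c1, c2, c3]
          · simp [c1, c2, c3]
      · simp [c1]
    have heven : Even T.card := hTcard ▸ h2 i j
    have hpos : 1 ≤ T.card := Finset.card_pos.mpr ⟨s, hsT⟩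
    obtain ⟨m, hm⟩ := heven
    have : 2 ≤ T.card := by omega
    exact this.trans (Finset.card_le_card hsub)

open Fin.NatCast Fin.CommRing in
lemma auxG_connected (l : ℕ) [NeZero l] (pl : Fin l → ℕ) (nl : Fin l → Option ℕ)
    (h1 : ∀ s : Fin l, pl s ≠ pl (s + 1)) : (auxG l pl nl).Connected := by
  set G := auxG l pl nl with hG
  have step : ∀ s : Fin l, G.Reachable ⟨Sum.inl (pl s), mem_auxS_inl l pl nl s⟩
      ⟨Sum.inl (pl (s + 1)), mem_auxS_inl l pl nl (s + 1)⟩ := by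
    intro s
    cases hns : nl s with
    | none =>
      apply SimpleGraph.Adj.reachable
      refine ⟨?_, s, Or.inl ⟨hns, Or.inl ⟨rfl, rfl⟩⟩⟩
      simp only [ne_eq, Sum.inl.injEq]
      exact h1 s
    | some j =>
      have hmid : Sum.inr j ∈ auxS l pl nl := mem_auxS_inr l pl nl hns
      refine SimpleGraph.Reachable.trans (SimpleGraph.Adj.reachable (v := ⟨Sum.inr j, hmid⟩) ?_)
        (SimpleGraph.Adj.reachable ?_)
      · exact ⟨by simp, s, Or.inr ⟨j, hns, Or.inr ⟨rfl, Or.inl rfl⟩⟩⟩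
      · exact ⟨by simp, s, Or.inr ⟨j, hns, Or.inl ⟨rfl, Or.inr rfl⟩⟩⟩
  have reachP : ∀ s : Fin l, G.Reachable ⟨Sum.inl (pl 0), mem_auxS_inl l pl nl 0⟩
      ⟨Sum.inl (pl s), mem_auxS_inl l pl nl s⟩ := by
    have key : ∀ n : ℕ, G.Reachable ⟨Sum.inl (pl 0), mem_auxS_inl l pl nl 0⟩
        ⟨Sum.inl (pl ((n : ℕ) : Fin l)), mem_auxS_inl l pl nl _⟩ := by
      intro n
      induction n with
      | zero =>
        simp only [Nat.cast_zero]
        exact SimpleGraph.Reachable.refl _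
      | succ n ihn =>
        have : ((n + 1 : ℕ) : Fin l) = ((n : ℕ) : Fin l) + 1 := by push_cast; ring
        rw [this]
        exact ihn.trans (step _)
    intro s
    have := key (s : ℕ)
    rwa [Fin.cast_val_eq_self s] at this
  haveI : Nonempty ↥(auxS l pl nl) := ⟨⟨Sum.inl (pl 0), mem_auxS_inl l pl nl 0⟩⟩
  refine ⟨fun a b => ?_⟩
  have base : ∀ v : ↥(auxS l pl nl), G.Reachable ⟨Sum.inl (pl 0), mem_auxS_inl l pl nl 0⟩ v := by
    rintro ⟨x, hx⟩
    simp only [auxS, Finset.mem_union, Finset.mem_image, Finset.mem_biUnion] at hx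
    rcases hx with ⟨i, hi, rfl⟩ | ⟨j, hj, rfl⟩
    · simp only [Finset.mem_image, Finset.mem_univ, true_and] at hi
      obtain ⟨s, rfl⟩ := hi
      exact reachP s
    · obtain ⟨s, _, hj⟩ := hj
      simp only [Option.mem_toFinset, Option.mem_def] at hj
      refine (reachP s).trans (SimpleGraph.Adj.reachable ?_)
      exact ⟨by simp, s, Or.inr ⟨j, hj, Or.inr ⟨rfl, Or.inl rfl⟩⟩⟩
  exact (base a).symm.trans (base b)

end

theorem stmt12 (l : ℕ) [NeZero l] (hl : 2 ≤ l)
    (pl : Fin l → ℕ) (nl : Fin l → Option ℕ)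
    (h : IsSimpleLabeling l pl nl) :
    (((Finset.univ.image pl).card +
        (Finset.univ.biUnion fun s => (nl s).toFinset).card : ℕ) : ℝ) ≤
      ((l : ℝ) + (Finset.univ.filter fun s : Fin l => nl s ≠ none).card) / 2 + 1 := by
  classical
  obtain ⟨h1, h2, h3⟩ := h
  haveI : Fintype ↥(auxG l pl nl).edgeSet := Fintype.ofFinite _
  set G := auxG l pl nl with hG
  set E := G.edgeFinset with hE
  have hVcard : Fintype.card ↥(auxS l pl nl) =
      (univ.image pl).card + (univ.biUnion fun s => (nl s).toFinset).card := by
    rw [Fintype.card_coe]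
    unfold auxS
    rw [Finset.card_union_of_disjoint, Finset.card_image_of_injective _ Sum.inl_injective,
        Finset.card_image_of_injective _ Sum.inr_injective]
    rw [Finset.disjoint_left]
    rintro x hx hy
    simp only [Finset.mem_image] at hx hy
    obtain ⟨i, -, rfl⟩ := hx
    obtain ⟨j, -, hji⟩ := hy
    simp at hji
  have hVE : Fintype.card ↥(auxS l pl nl) ≤ E.card + 1 :=
    connected_card_le_aux E.card G le_rfl (auxG_connected l pl nl h1)
  have step1 : 2 * E.card ≤ ∑ e ∈ E, (suppSet l pl nl e).card := by
    have : 2 * E.card = ∑ _e ∈ E, 2 := by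
      rw [Finset.sum_const, smul_eq_mul, mul_comm]
    rw [this]
    refine Finset.sum_le_sum fun e he => ?_
    revert he
    induction e using Sym2.ind with
    | _ a b =>
    intro he
    rw [hE, SimpleGraph.mem_edgeFinset, SimpleGraph.mem_edgeSet] at he
    exact two_le_suppSet l pl nl h1 h2 h3 a b he
  have step2 : ∑ e ∈ E, (suppSet l pl nl e).card =
      ∑ s : Fin l, (E.filter (fun e => s ∈ suppSet l pl nl e)).card := by
    have hc : ∀ e, (suppSet l pl nl e).card =
        ∑ s : Fin l, if s ∈ suppSet l pl nl e then 1 else 0 := by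
      intro e
      rw [← Finset.card_filter]
      congr 1
      ext s
      simp
    simp_rw [hc]
    rw [Finset.sum_comm]
    exact Finset.sum_congr rfl fun s _ => (Finset.card_filter _ _).symm
  have step3 : ∑ s : Fin l, (E.filter (fun e => s ∈ suppSet l pl nl e)).card ≤
      ∑ s : Fin l, (if nl s = none then 1 else 2) :=
    Finset.sum_le_sum fun s _ => card_filter_mem_suppSet_le l pl nl s
  have step4 : ∑ s : Fin l, (if nl s = none then 1 else 2) =
      l + (univ.filter fun s : Fin l => nl s ≠ none).card := by
    have hpt : ∀ s : Fin l, (if nl s = none then 1 else 2) =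
        1 + (if nl s ≠ none then 1 else 0) := by
      intro s
      by_cases hs : nl s = none <;> simp [hs]
    simp_rw [hpt]
    rw [Finset.sum_add_distrib, Finset.sum_const, Finset.card_univ, Fintype.card_fin,
      smul_eq_mul, mul_one, Finset.card_filter]
  have hdouble : 2 * E.card ≤ l + (univ.filter fun s : Fin l => nl s ≠ none).card := by
    calc 2 * E.card ≤ ∑ e ∈ E, (suppSet l pl nl e).card := step1
      _ = _ := step2
      _ ≤ _ := step3
      _ = _ := step4
  have final_nat : 2 * ((univ.image pl).card +
      (univ.biUnion fun s => (nl s).toFinset).card) ≤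
      l + (univ.filter fun s : Fin l => nl s ≠ none).card + 2 := by omega
  have fr := (Nat.cast_le (α := ℝ)).mpr final_nat
  push_cast at fr ⊢
  linarith
end

section
/- In a multi-labeling of an l-graph with l ≥ 4, suppose a p-vertex V has a p-label appearing on no other p-vertex. Let U, T be the n-vertex and p-vertex preceding V, and W, X be the n-vertex and p-vertex following V. If T and X have different p-labels, then deleting V and W and connecting U to X yields an (l−1)-graph with a valid multi-labeling; if T and X have the same p-label, then deleting U, V, W, X and connecting T to the n-vertex after X yields an (l−2)-graph with a valid multi-labeling. -/
open Finset

private lemma modfin {m a r : ℕ} (hr : r < m) (h : a = r ∨ a = r + m ∨ a = r + m + m) : a % m = r := by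
  rcases h with h|h|h <;> subst h <;> simp [Nat.add_mod_right, Nat.mod_eq_of_lt hr]

private lemma modcongr {m a b : ℕ} (h : a = b ∨ a = b + m ∨ b = a + m) : a % m = b % m := by
  rcases h with h|h|h <;> simp [h, Nat.add_mod_right]

/-- Deleting a uniquely-labeled `p`-vertex `V` (at position `v`), together with the
following `n`-vertex `W` (case 1: the surrounding `p`-vertices `T`, `X` have different
labels), or together with `U, W, X` (case 2: `T` and `X` have the same label), yields a
valid multi-labeling of an `(l-1)`-graph resp. `(l-2)`-graph. Here `l = k + 4 ≥ 4`, and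
the surviving vertices are re-indexed starting just after the deleted portion. -/
theorem stmt13 (k D : ℕ)
    (pl : Fin (k + 4) → ℕ) (nl : Fin (k + 4) → Finset ℕ)
    (h : IsMultiLabeling (k + 4) D pl nl)
    (v : Fin (k + 4)) (hv : ∀ s : Fin (k + 4), s ≠ v → pl s ≠ pl v) :
    (pl (v - 1) ≠ pl (v + 1) →
      IsMultiLabeling (k + 3) D
        (fun t : Fin (k + 3) => pl (v + 1 + Fin.castLE (by omega) t))
        (fun t : Fin (k + 3) => nl (v + 1 + Fin.castLE (by omega) t))) ∧
    (pl (v - 1) = pl (v + 1) →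
      IsMultiLabeling (k + 2) D
        (fun t : Fin (k + 2) => pl (v + 2 + Fin.castLE (by omega) t))
        (fun t : Fin (k + 2) =>
          if (t : ℕ) = k + 1 then nl (v + 1)
          else nl (v + 2 + Fin.castLE (by omega) t))) := by
  open Fin.NatCast Fin.CommRing in (
  obtain ⟨hadj, hcard, heven⟩ := h
  -- key: the two n-vertices adjacent to v carry the same label set
  have hkey : nl (v - 1) = nl v := by
    ext j
    have he := heven (pl v) j
    unfold edgeCount at he
    rw [Finset.sum_add_distrib] at he
    have h1 : ∑ s : Fin (k+4), (if pl s = pl v ∧ j ∈ nl s then 1 else 0) =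
        (if j ∈ nl v then 1 else 0) := by
      rw [Finset.sum_eq_single v]
      · simp
      · intro s _ hs
        simp [hv s hs]
      · simp
    have h2 : ∑ s : Fin (k+4), (if pl (s+1) = pl v ∧ j ∈ nl s then 1 else 0) =
        (if j ∈ nl (v-1) then 1 else 0) := by
      rw [Finset.sum_eq_single (v-1)]
      · simp
      · intro s _ hs
        have : s + 1 ≠ v := fun hc => hs (by rw [← hc]; ring)
        simp [hv _ this]
      · simp
    rw [h1, h2] at he
    by_cases c1 : j ∈ nl v <;> by_cases c2 : j ∈ nl (v-1) <;> simp [c1, c2] at he ⊢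
  -- common index identities
  have m1 : (1:ℕ) % (k+4) = 1 := Nat.mod_eq_of_lt (by omega)
  have m2 : (2:ℕ) % (k+4) = 2 := Nat.mod_eq_of_lt (by omega)
  constructor
  · -- case 1 : delete V and W
    intro hne
    have hcast : ∀ (t : Fin (k+3)), (Fin.castLE (by omega : k+3 ≤ k+4) t : Fin (k+4)) = ((t : ℕ) : Fin (k+4)) := by
      intro t; apply Fin.ext
      simp [Fin.val_natCast, Nat.mod_eq_of_lt (show (t:ℕ) < k+4 by omega)]
    have hvadd : ∀ (t : Fin (k+3)), ((t+1 : Fin (k+3)) : ℕ) = ((t : ℕ) + 1) % (k+3) := by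
      intro t; simp only [Fin.add_def, Fin.val_one]
    have i1 : v + 1 + ((k+2 : ℕ) : Fin (k+4)) = v - 1 := by
      apply Fin.ext
      simp only [Fin.sub_def, Fin.add_def, Fin.val_natCast, Fin.val_one, Nat.mod_add_mod, Nat.add_mod_mod, m1]
      apply modcongr; omega
    have i2 : v + 1 + ((k+2+1 : ℕ) : Fin (k+4)) = v := by
      apply Fin.ext
      simp only [Fin.sub_def, Fin.add_def, Fin.val_natCast, Fin.val_one, Nat.mod_add_mod, Nat.add_mod_mod, m1]
      apply modfin v.isLt; omega
    have i3 : v + 1 + ((k+3 : ℕ) : Fin (k+4)) = v := by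
      apply Fin.ext
      simp only [Fin.sub_def, Fin.add_def, Fin.val_natCast, Fin.val_one, Nat.mod_add_mod, Nat.add_mod_mod, m1]
      apply modfin v.isLt; omega
    have i4 : v + 1 + ((k+3+1 : ℕ) : Fin (k+4)) = v + 1 := by
      apply Fin.ext
      simp only [Fin.sub_def, Fin.add_def, Fin.val_natCast, Fin.val_one, Nat.mod_add_mod, Nat.add_mod_mod, m1]
      apply modcongr; omega
    have i5 : v + 1 + ((0 : ℕ) : Fin (k+4)) = v + 1 := by simp
    refine ⟨?_, ?_, ?_⟩
    · -- adjacency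
      intro t
      by_cases ht : (t : ℕ) = k + 2
      · simp only [hcast, hvadd, ht]
        rw [show (k+2+1) % (k+3) = 0 by apply modfin <;> omega]
        simp only [i1, Nat.cast_zero, add_zero]
        exact hne
      · simp only [hcast, hvadd]
        rw [Nat.mod_eq_of_lt (show (t:ℕ)+1 < k+3 by omega)]
        rw [show v + 1 + (((t:ℕ)+1 : ℕ) : Fin (k+4)) = v + 1 + ((t:ℕ) : Fin (k+4)) + 1 by
          push_cast; ring]
        exact hadj _
    · intro t; exact hcard _
    · -- evenness
      intro i j
      have hE := heven i j
      have hshift : edgeCount pl nl i j = ∑ n ∈ Finset.range (k+4),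
          ((if pl (v + 1 + (n : Fin (k+4))) = i ∧ j ∈ nl (v + 1 + (n : Fin (k+4))) then 1 else 0) +
           (if pl (v + 1 + ((n+1 : ℕ) : Fin (k+4))) = i ∧ j ∈ nl (v + 1 + (n : Fin (k+4))) then 1 else 0)) := by
        unfold edgeCount
        rw [← Equiv.sum_comp (Equiv.addLeft (v+1)) (fun s : Fin (k+4) =>
          ((if pl s = i ∧ j ∈ nl s then 1 else 0) + (if pl (s + 1) = i ∧ j ∈ nl s then 1 else 0)))]
        rw [← Fin.sum_univ_eq_sum_range (fun n : ℕ =>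
            ((if pl (v + 1 + (n : Fin (k+4))) = i ∧ j ∈ nl (v + 1 + (n : Fin (k+4))) then 1 else 0) +
             (if pl (v + 1 + ((n+1 : ℕ) : Fin (k+4))) = i ∧ j ∈ nl (v + 1 + (n : Fin (k+4))) then 1 else 0))) (k+4)]
        apply Finset.sum_congr rfl
        intro x _
        simp only [Equiv.coe_addLeft]
        push_cast [Fin.cast_val_eq_self]
        simp [add_assoc]
      have hshift' : edgeCount (fun t : Fin (k+3) => pl (v + 1 + Fin.castLE (by omega) t))
          (fun t : Fin (k+3) => nl (v + 1 + Fin.castLE (by omega) t)) i j = ∑ n ∈ Finset.range (k+3),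
          ((if pl (v + 1 + (n : Fin (k+4))) = i ∧ j ∈ nl (v + 1 + (n : Fin (k+4))) then 1 else 0) +
           (if pl (v + 1 + (((n+1) % (k+3) : ℕ) : Fin (k+4))) = i ∧ j ∈ nl (v + 1 + (n : Fin (k+4))) then 1 else 0)) := by
        unfold edgeCount
        rw [← Fin.sum_univ_eq_sum_range (fun n : ℕ =>
          ((if pl (v + 1 + (n : Fin (k+4))) = i ∧ j ∈ nl (v + 1 + (n : Fin (k+4))) then 1 else 0) +
           (if pl (v + 1 + (((n+1) % (k+3) : ℕ) : Fin (k+4))) = i ∧ j ∈ nl (v + 1 + (n : Fin (k+4))) then 1 else 0))) (k+3)]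
        apply Finset.sum_congr rfl
        intro t _
        simp only [hcast, hvadd]
      rw [hshift']
      rw [hshift] at hE
      rw [Finset.sum_range_succ, Finset.sum_range_succ] at hE
      rw [Finset.sum_range_succ]
      have htrunc : ∀ n ∈ Finset.range (k+2), (n+1) % (k+3) = n+1 := by
        intro n hn; rw [Finset.mem_range] at hn; exact Nat.mod_eq_of_lt (by omega)
      rw [Finset.sum_congr rfl (fun n hn => by rw [htrunc n hn])]
      rw [show (k+2+1) % (k+3) = 0 by apply modfin <;> omega]
      simp only [i1, i2, i3, i4, i5, Nat.cast_zero, add_zero, hkey] at hE ⊢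
      rw [Nat.even_iff] at hE ⊢
      omega
  · -- case 2 : delete U, V, W, X
    intro heq
    have hcast : ∀ (t : Fin (k+2)), (Fin.castLE (by omega : k+2 ≤ k+4) t : Fin (k+4)) = ((t : ℕ) : Fin (k+4)) := by
      intro t; apply Fin.ext
      simp [Fin.val_natCast, Nat.mod_eq_of_lt (show (t:ℕ) < k+4 by omega)]
    have hvadd : ∀ (t : Fin (k+2)), ((t+1 : Fin (k+2)) : ℕ) = ((t : ℕ) + 1) % (k+2) := by
      intro t; simp only [Fin.add_def, Fin.val_one]
    have j1 : v + 2 + ((k+1 : ℕ) : Fin (k+4)) = v - 1 := by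
      apply Fin.ext
      simp only [Fin.sub_def, Fin.add_def, Fin.val_natCast, Fin.val_one, Fin.coe_ofNat_eq_mod, Nat.mod_add_mod, Nat.add_mod_mod, m1, m2]
      apply modcongr; omega
    have j2 : v + 2 + ((k+1+1 : ℕ) : Fin (k+4)) = v := by
      apply Fin.ext
      simp only [Fin.sub_def, Fin.add_def, Fin.val_natCast, Fin.val_one, Fin.coe_ofNat_eq_mod, Nat.mod_add_mod, Nat.add_mod_mod, m1, m2]
      apply modfin v.isLt; omega
    have j3 : v + 2 + ((k+2 : ℕ) : Fin (k+4)) = v := by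
      apply Fin.ext
      simp only [Fin.sub_def, Fin.add_def, Fin.val_natCast, Fin.val_one, Fin.coe_ofNat_eq_mod, Nat.mod_add_mod, Nat.add_mod_mod, m1, m2]
      apply modfin v.isLt; omega
    have j4 : v + 2 + ((k+2+1 : ℕ) : Fin (k+4)) = v + 1 := by
      apply Fin.ext
      simp only [Fin.sub_def, Fin.add_def, Fin.val_natCast, Fin.val_one, Fin.coe_ofNat_eq_mod, Nat.mod_add_mod, Nat.add_mod_mod, m1, m2]
      apply modcongr; omega
    have j5 : v + 2 + ((k+3 : ℕ) : Fin (k+4)) = v + 1 := by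
      apply Fin.ext
      simp only [Fin.sub_def, Fin.add_def, Fin.val_natCast, Fin.val_one, Fin.coe_ofNat_eq_mod, Nat.mod_add_mod, Nat.add_mod_mod, m1, m2]
      apply modcongr; omega
    have j6 : v + 2 + ((k+3+1 : ℕ) : Fin (k+4)) = v + 2 := by
      apply Fin.ext
      simp only [Fin.sub_def, Fin.add_def, Fin.val_natCast, Fin.val_one, Fin.coe_ofNat_eq_mod, Nat.mod_add_mod, Nat.add_mod_mod, m1, m2]
      apply modcongr; omega
    have j7 : v + 2 + ((0 : ℕ) : Fin (k+4)) = v + 2 := by simp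
    refine ⟨?_, ?_, ?_⟩
    · -- adjacency
      intro t
      by_cases ht : (t : ℕ) = k + 1
      · simp only [hcast, hvadd, ht]
        rw [show (k+1+1) % (k+2) = 0 by apply modfin <;> omega]
        simp only [j1, Nat.cast_zero, add_zero, heq]
        rw [show v + 2 = v + 1 + 1 by ring]
        exact hadj _
      · simp only [hcast, hvadd]
        rw [Nat.mod_eq_of_lt (show (t:ℕ)+1 < k+2 by omega)]
        rw [show v + 2 + (((t:ℕ)+1 : ℕ) : Fin (k+4)) = v + 2 + ((t:ℕ) : Fin (k+4)) + 1 by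
          push_cast; ring]
        exact hadj _
    · -- cards
      intro t
      dsimp only
      by_cases hc : (t : ℕ) = k + 1
      · simp only [if_pos hc]; exact hcard _
      · simp only [if_neg hc]; exact hcard _
    · -- evenness
      intro i j
      have hE := heven i j
      have hshift : edgeCount pl nl i j = ∑ n ∈ Finset.range (k+4),
          ((if pl (v + 2 + (n : Fin (k+4))) = i ∧ j ∈ nl (v + 2 + (n : Fin (k+4))) then 1 else 0) +
           (if pl (v + 2 + ((n+1 : ℕ) : Fin (k+4))) = i ∧ j ∈ nl (v + 2 + (n : Fin (k+4))) then 1 else 0)) := by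
        unfold edgeCount
        rw [← Equiv.sum_comp (Equiv.addLeft (v+2)) (fun s : Fin (k+4) =>
          ((if pl s = i ∧ j ∈ nl s then 1 else 0) + (if pl (s + 1) = i ∧ j ∈ nl s then 1 else 0)))]
        rw [← Fin.sum_univ_eq_sum_range (fun n : ℕ =>
            ((if pl (v + 2 + (n : Fin (k+4))) = i ∧ j ∈ nl (v + 2 + (n : Fin (k+4))) then 1 else 0) +
             (if pl (v + 2 + ((n+1 : ℕ) : Fin (k+4))) = i ∧ j ∈ nl (v + 2 + (n : Fin (k+4))) then 1 else 0))) (k+4)]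
        apply Finset.sum_congr rfl
        intro x _
        simp only [Equiv.coe_addLeft]
        push_cast [Fin.cast_val_eq_self]
        simp [add_assoc]
      have hshift' : edgeCount (fun t : Fin (k+2) => pl (v + 2 + Fin.castLE (by omega) t))
          (fun t : Fin (k+2) => if (t : ℕ) = k + 1 then nl (v + 1) else nl (v + 2 + Fin.castLE (by omega) t)) i j
          = ∑ n ∈ Finset.range (k+2),
          ((if pl (v + 2 + (n : Fin (k+4))) = i ∧ j ∈ (if n = k + 1 then nl (v+1) else nl (v + 2 + (n : Fin (k+4)))) then 1 else 0) +
           (if pl (v + 2 + (((n+1) % (k+2) : ℕ) : Fin (k+4))) = i ∧ j ∈ (if n = k + 1 then nl (v+1) else nl (v + 2 + (n : Fin (k+4)))) then 1 else 0)) := by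
        unfold edgeCount
        rw [← Fin.sum_univ_eq_sum_range (fun n : ℕ =>
          ((if pl (v + 2 + (n : Fin (k+4))) = i ∧ j ∈ (if n = k + 1 then nl (v+1) else nl (v + 2 + (n : Fin (k+4)))) then 1 else 0) +
           (if pl (v + 2 + (((n+1) % (k+2) : ℕ) : Fin (k+4))) = i ∧ j ∈ (if n = k + 1 then nl (v+1) else nl (v + 2 + (n : Fin (k+4)))) then 1 else 0))) (k+2)]
        apply Finset.sum_congr rfl
        intro t _
        simp only [hcast, hvadd]
      rw [hshift']
      rw [hshift] at hE
      rw [Finset.sum_range_succ, Finset.sum_range_succ, Finset.sum_range_succ] at hE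
      rw [Finset.sum_range_succ]
      have htr : (∑ n ∈ Finset.range (k+1),
          ((if pl (v + 2 + (n : Fin (k+4))) = i ∧ j ∈ (if n = k + 1 then nl (v+1) else nl (v + 2 + (n : Fin (k+4)))) then 1 else 0) +
           (if pl (v + 2 + (((n+1) % (k+2) : ℕ) : Fin (k+4))) = i ∧ j ∈ (if n = k + 1 then nl (v+1) else nl (v + 2 + (n : Fin (k+4)))) then 1 else 0)))
          = ∑ n ∈ Finset.range (k+1),
          ((if pl (v + 2 + (n : Fin (k+4))) = i ∧ j ∈ nl (v + 2 + (n : Fin (k+4))) then 1 else 0) +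
           (if pl (v + 2 + ((n+1 : ℕ) : Fin (k+4))) = i ∧ j ∈ nl (v + 2 + (n : Fin (k+4))) then 1 else 0)) := by
        apply Finset.sum_congr rfl
        intro n hn
        rw [Finset.mem_range] at hn
        simp only [Nat.mod_eq_of_lt (show n+1 < k+2 by omega), if_neg (show ¬ n = k+1 by omega)]
      rw [htr, show (k+1+1) % (k+2) = 0 by apply modfin <;> omega]
      simp only [eq_self_iff_true, if_true]
      simp only [j1, j2, j3, j4, j5, j6, j7, Nat.cast_zero, add_zero, hkey, heq] at hE ⊢
      rw [Nat.even_iff] at hE ⊢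
      omega)
end

section
/- For l = 2 or l = 3, every multi-labeling of the l-graph has all l p-labels pairwise distinct, and all l n-vertices carry the same tuple of n-labels up to reordering. -/
open Finset

theorem stmt14 (l D : ℕ) [NeZero l] (hl : l = 2 ∨ l = 3)
    (pl : Fin l → ℕ) (nl : Fin l → Finset ℕ)
    (h : IsMultiLabeling l D pl nl) :
    Function.Injective pl ∧ ∀ s t : Fin l, nl s = nl t := by
  obtain ⟨hne, -, heven⟩ := h
  rcases hl with rfl | rfl
  · have h01 : pl 0 ≠ pl 1 := hne 0
    have key : ∀ j, j ∈ nl 0 ↔ j ∈ nl 1 := by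
      intro j
      have e0 := heven (pl 0) j
      simp only [edgeCount, Fin.sum_univ_two, show (0:Fin 2)+1 = 1 from rfl,
        show (1:Fin 2)+1 = 0 from rfl, Nat.even_iff, h01, Ne.symm h01,
        false_and, if_false, true_and, if_true, eq_self_iff_true] at e0
      by_cases ha : j ∈ nl 0 <;> by_cases hb : j ∈ nl 1 <;> simp_all
    constructor
    · intro a b hab
      fin_cases a <;> fin_cases b <;> simp_all
    · intro s t
      have he : nl 0 = nl 1 := Finset.ext key
      fin_cases s <;> fin_cases t <;> simp_all
  · have h01 : pl 0 ≠ pl 1 := hne 0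
    have h12 : pl 1 ≠ pl 2 := hne 1
    have h20 : pl 2 ≠ pl 0 := hne 2
    have key1 : ∀ j, j ∈ nl 0 ↔ j ∈ nl 1 := by
      intro j
      have e1 := heven (pl 1) j
      simp only [edgeCount, Fin.sum_univ_three, show (0:Fin 3)+1 = 1 from rfl,
        show (1:Fin 3)+1 = 2 from rfl, show (2:Fin 3)+1 = 0 from rfl, Nat.even_iff,
        h01, h12, Ne.symm h01, Ne.symm h12, Ne.symm h20, h20,
        false_and, if_false, true_and, if_true, eq_self_iff_true] at e1
      by_cases ha : j ∈ nl 0 <;> by_cases hb : j ∈ nl 1 <;> simp_all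
    have key2 : ∀ j, j ∈ nl 1 ↔ j ∈ nl 2 := by
      intro j
      have e2 := heven (pl 2) j
      simp only [edgeCount, Fin.sum_univ_three, show (0:Fin 3)+1 = 1 from rfl,
        show (1:Fin 3)+1 = 2 from rfl, show (2:Fin 3)+1 = 0 from rfl, Nat.even_iff,
        h01, h12, Ne.symm h01, Ne.symm h12, Ne.symm h20, h20,
        false_and, if_false, true_and, if_true, eq_self_iff_true] at e2
      by_cases ha : j ∈ nl 1 <;> by_cases hb : j ∈ nl 2 <;> simp_all
    constructor
    · intro a b hab
      fin_cases a <;> fin_cases b <;> simp_all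
    · intro s t
      have he1 : nl 0 = nl 1 := Finset.ext key1
      have he2 : nl 1 = nl 2 := Finset.ext key2
      fin_cases s <;> fin_cases t <;> simp_all
end

section
/- Let k: ℝ → ℝ be measurable with |k(x)| ≤ C e^{β|x|} for all x, and for each n ≥ 1 let y_n = n^{−1/2} Σ_{j=1}^n ξ_j η_j where ξ_j, η_j are i.i.d. N(0,1), all independent. Then E[e^{4β|y_n|}] is bounded uniformly in n > 16β², and lim_{R→∞} sup_n E[ k(y_n)² 1{|y_n| ≥ R} ] = 0. -/
open MeasureTheory ProbabilityTheory Finset Real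
open scoped ENNReal NNReal

lemma stmt18_bern (a : ℝ) (ha : 0 < a) (n : ℕ) (han : a < n) :
    (1 - a/n)^n ≤ (1 - a/((n:ℝ)+1))^(n+1) := by
  have hN : (0:ℝ) < n := lt_trans ha han
  set N := (n:ℝ) with hNdef
  have hx : 0 < 1 - a/N := by
    have : a/N < 1 := (div_lt_one hN).2 han
    linarith
  set x := 1 - a/N with hxdef
  set u := a/(N*(N+1)) with hudef
  have hu : 0 ≤ u := by positivity
  have hN1 : (0:ℝ) < N + 1 := by linarith
  have hy : 1 - a/(N+1) = x + u := by
    rw [hxdef, hudef]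
    field_simp
    ring
  have hber : 1 + ((n:ℝ)+1) * (u/x) ≤ (1 + u/x)^(n+1) := by
    have hux : (0:ℝ) ≤ u/x := by positivity
    have := one_add_mul_le_pow (a := u/x) (by linarith : (-2:ℝ) ≤ u/x) (n+1)
    push_cast at this
    linarith
  have key : x^n ≤ (x+u)^(n+1) := by
    have h1 : x + (N+1)*u = 1 := by
      rw [hxdef, hudef]; field_simp; ring
    calc x^n = x^n * (x + (N+1)*u) := by rw [h1, mul_one]
    _ = x^(n+1) * (1 + (N+1) * (u/x)) := by
        rw [pow_succ]
        field_simp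
    _ ≤ x^(n+1) * (1 + u/x)^(n+1) := by
        apply mul_le_mul_of_nonneg_left _ (pow_nonneg hx.le _)
        exact hber
    _ = (x + u)^(n+1) := by
        rw [← mul_pow]
        congr 1
        field_simp
  rw [hy]
  exact key

lemma stmt18_sqrt_pow (x : ℝ) (hx : 0 ≤ x) (n : ℕ) : (Real.sqrt x)^n = Real.sqrt (x^n) := by
  induction n with
  | zero => simp
  | succ m ih => rw [pow_succ, pow_succ, ih, ← Real.sqrt_mul (pow_nonneg hx m)]

/-- The quantity `(1 - a/n)^(-n/2)`, which bounds the moment generating function. -/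
noncomputable def stmt18f (a : ℝ) (n : ℕ) : ℝ := ((Real.sqrt (1 - a/(n:ℝ)))⁻¹)^n

lemma stmt18f_nonneg (a : ℝ) (n : ℕ) : 0 ≤ stmt18f a n :=
  pow_nonneg (inv_nonneg.2 (Real.sqrt_nonneg _)) n

lemma stmt18_step (a : ℝ) (ha : 0 < a) (n : ℕ) (han : a < n) :
    stmt18f a (n+1) ≤ stmt18f a n := by
  have hN : (0:ℝ) < n := lt_trans ha han
  have hx : 0 < 1 - a/(n:ℝ) := by
    have : a/(n:ℝ) < 1 := (div_lt_one hN).2 han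
    linarith
  have hy : 0 < 1 - a/((n:ℝ)+1) := by
    have h1 : a/((n:ℝ)+1) < 1 := (div_lt_one (by linarith)).2 (by linarith)
    linarith
  have hcast : ((n+1 : ℕ):ℝ) = (n:ℝ)+1 := by push_cast; ring
  rw [stmt18f, stmt18f, hcast, inv_pow, inv_pow]
  apply inv_anti₀
  · exact pow_pos (Real.sqrt_pos.2 hx) n
  · rw [stmt18_sqrt_pow _ hx.le, stmt18_sqrt_pow _ hy.le]
    exact Real.sqrt_le_sqrt (stmt18_bern a ha n han)

lemma stmt18f_anti (a : ℝ) (ha : 0 < a) (n₀ : ℕ) (han₀ : a < n₀) :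
    ∀ n : ℕ, n₀ ≤ n → stmt18f a n ≤ stmt18f a n₀ := by
  intro n hn
  induction n, hn using Nat.le_induction with
  | base => exact le_refl _
  | succ m hm ih =>
    have ham : a < m := lt_of_lt_of_le han₀ (by exact_mod_cast hm)
    exact le_trans (stmt18_step a ha m ham) ih

lemma stmt18_gauss_density (g : ℝ → ℝ) :
    ∫ x, g x ∂(gaussianReal 0 1) = ∫ x, gaussianPDFReal 0 1 x * g x := by
  rw [gaussianReal_of_var_ne_zero 0 one_ne_zero]
  have h : (gaussianPDF 0 1) = fun x => ((gaussianPDFReal 0 1 x).toNNReal : ℝ≥0∞) := by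
    funext x; rfl
  rw [h, integral_withDensity_eq_integral_smul
    (measurable_gaussianPDFReal 0 1).real_toNNReal g]
  congr 1
  funext x
  rw [NNReal.smul_def, smul_eq_mul, Real.coe_toNNReal _ (gaussianPDFReal_nonneg 0 1 x)]

lemma stmt18_gauss_integrable_iff (g : ℝ → ℝ) :
    Integrable g (gaussianReal 0 1) ↔ Integrable (fun x => gaussianPDFReal 0 1 x * g x) := by
  rw [gaussianReal_of_var_ne_zero 0 one_ne_zero]
  have h : (gaussianPDF 0 1) = fun x => ((gaussianPDFReal 0 1 x).toNNReal : ℝ≥0∞) := by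
    funext x; rfl
  rw [h, integrable_withDensity_iff_integrable_smul
    (measurable_gaussianPDFReal 0 1).real_toNNReal]
  have heq : (fun x => (gaussianPDFReal 0 1 x).toNNReal • g x)
      = fun x => gaussianPDFReal 0 1 x * g x := by
    funext x
    rw [NNReal.smul_def, smul_eq_mul, Real.coe_toNNReal _ (gaussianPDFReal_nonneg 0 1 x)]
  rw [heq]

lemma stmt18_pdf_eq (x : ℝ) :
    gaussianPDFReal 0 1 x = (Real.sqrt (2*Real.pi))⁻¹ * Real.exp (-(1/2) * x^2) := by
  rw [gaussianPDFReal]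
  norm_num
  left
  ring

lemma stmt18_gauss_sq_integrable {c : ℝ} (hc : c < 1/2) :
    Integrable (fun x => Real.exp (c * x^2)) (gaussianReal 0 1) := by
  rw [stmt18_gauss_integrable_iff]
  have h : (fun x => gaussianPDFReal 0 1 x * Real.exp (c * x^2))
      = fun x => (Real.sqrt (2*Real.pi))⁻¹ * Real.exp (-(1/2 - c) * x^2) := by
    funext x
    rw [stmt18_pdf_eq, mul_assoc, ← Real.exp_add]
    ring_nf
  rw [h]
  exact (integrable_exp_neg_mul_sq (by linarith)).const_mul _

lemma stmt18_gauss_sq_integral {c : ℝ} (hc : c < 1/2) :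
    ∫ x, Real.exp (c * x^2) ∂(gaussianReal 0 1) = (Real.sqrt (1 - 2*c))⁻¹ := by
  rw [stmt18_gauss_density]
  have h : (fun x => gaussianPDFReal 0 1 x * Real.exp (c * x^2))
      = fun x => (Real.sqrt (2*Real.pi))⁻¹ * Real.exp (-(1/2 - c) * x^2) := by
    funext x
    rw [stmt18_pdf_eq, mul_assoc, ← Real.exp_add]
    ring_nf
  rw [h, integral_const_mul, integral_gaussian]
  have hb : (0:ℝ) < 1/2 - c := by linarith
  have h1 : Real.pi / (1/2 - c) = 2*Real.pi / (1 - 2*c) := by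
    rw [div_eq_div_iff (by linarith) (by linarith)]; ring
  rw [h1, Real.sqrt_div (by positivity : (0:ℝ) ≤ 2*Real.pi)]
  have h2 : Real.sqrt (2*Real.pi) ≠ 0 := by positivity
  field_simp

lemma stmt18_gauss_mgf_integrable (t : ℝ) :
    Integrable (fun x => Real.exp (t * x)) (gaussianReal 0 1) := by
  rw [stmt18_gauss_integrable_iff]
  have h : (fun x => gaussianPDFReal 0 1 x * Real.exp (t * x))
      = fun x => ((Real.sqrt (2*Real.pi))⁻¹ * Real.exp (t^2/2)) * Real.exp (-(1/2) * (x - t)^2) := by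
    funext x
    rw [stmt18_pdf_eq, mul_assoc, ← Real.exp_add, mul_assoc, ← Real.exp_add]
    ring_nf
  rw [h]
  exact ((integrable_exp_neg_mul_sq (by norm_num : (0:ℝ) < 1/2)).comp_sub_right t).const_mul _

lemma stmt18_gauss_mgf (t : ℝ) :
    ∫ x, Real.exp (t * x) ∂(gaussianReal 0 1) = Real.exp (t^2/2) := by
  rw [stmt18_gauss_density]
  have h : (fun x => gaussianPDFReal 0 1 x * Real.exp (t * x))
      = fun x => ((Real.sqrt (2*Real.pi))⁻¹ * Real.exp (t^2/2)) * Real.exp (-(1/2) * (x - t)^2) := by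
    funext x
    rw [stmt18_pdf_eq, mul_assoc, ← Real.exp_add, mul_assoc, ← Real.exp_add]
    ring_nf
  rw [h, integral_const_mul]
  rw [integral_sub_right_eq_self (fun x => Real.exp (-(1/2) * x^2)) t]
  rw [integral_gaussian]
  have h2 : Real.sqrt (Real.pi / (1/2)) = Real.sqrt (2 * Real.pi) := by norm_num; ring_nf
  rw [h2]
  have h3 : Real.sqrt (2*Real.pi) ≠ 0 := by positivity
  field_simp

lemma stmt18_prod_meas {s : ℝ} : Measurable (fun p : ℝ×ℝ => Real.exp (s * (p.1 * p.2))) :=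
  ((measurable_fst.mul measurable_snd).const_mul s).exp

lemma stmt18_inner_int (s x : ℝ) :
    (∫ y, Real.exp (s * (x * y)) ∂(gaussianReal 0 1)) = Real.exp ((s^2/2) * x^2) := by
  have h : (fun y => Real.exp (s * (x * y))) = fun y => Real.exp ((s*x) * y) := by
    funext y; ring_nf
  rw [h, stmt18_gauss_mgf (s*x)]
  congr 1
  ring

lemma stmt18_prod_integrable {s : ℝ} (hs : s^2 < 1) :
    Integrable (fun p : ℝ×ℝ => Real.exp (s * (p.1 * p.2)))
      ((gaussianReal 0 1).prod (gaussianReal 0 1)) := by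
  rw [integrable_prod_iff stmt18_prod_meas.aestronglyMeasurable]
  constructor
  · refine Filter.Eventually.of_forall fun x => ?_
    have h : (fun y => Real.exp (s * (x * y))) = fun y => Real.exp ((s*x) * y) := by
      funext y; ring_nf
    exact h ▸ stmt18_gauss_mgf_integrable (s*x)
  · have h : (fun x => ∫ y, ‖Real.exp (s * (x * y))‖ ∂(gaussianReal 0 1))
        = fun x => Real.exp ((s^2/2) * x^2) := by
      funext x
      rw [← stmt18_inner_int s x]
      congr 1
      funext y
      rw [Real.norm_eq_abs, abs_of_pos (Real.exp_pos _)]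
    rw [h]
    exact stmt18_gauss_sq_integrable (by linarith)

lemma stmt18_prod_integral {s : ℝ} (hs : s^2 < 1) :
    ∫ p, Real.exp (s * (p.1 * p.2)) ∂((gaussianReal 0 1).prod (gaussianReal 0 1))
      = (Real.sqrt (1 - s^2))⁻¹ := by
  rw [integral_prod _ (stmt18_prod_integrable hs)]
  have h : (fun x => ∫ y, Real.exp (s * (x * y)) ∂(gaussianReal 0 1))
      = fun x => Real.exp ((s^2/2) * x^2) := by
    funext x; exact stmt18_inner_int s x
  rw [h, stmt18_gauss_sq_integral (by linarith : s^2/2 < 1/2)]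
  congr 2
  ring

theorem stmt18 {Ω : Type*} [MeasureSpace Ω] [IsProbabilityMeasure (ℙ : Measure Ω)]
    (k : ℝ → ℝ) (hk : Measurable k) (C β : ℝ) (hC : 0 < C) (hβ : 0 < β)
    (hbound : ∀ x : ℝ, |k x| ≤ C * Real.exp (β * |x|))
    (g : ℕ × Bool → Ω → ℝ) (hgmeas : ∀ i, Measurable (g i))
    (hindep : iIndepFun g ℙ)
    (hlaw : ∀ i, Measure.map (g i) ℙ = gaussianReal 0 1)
    (y : ℕ → Ω → ℝ)
    (hy : ∀ n ω, y n ω =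
      (n : ℝ) ^ (-(1:ℝ)/2) * ∑ j ∈ range n, g (j, false) ω * g (j, true) ω) :
    (∃ B : ℝ, ∀ n : ℕ, 16 * β ^ 2 < n →
      (∫ ω, Real.exp (4 * β * |y n ω|) ∂ℙ) ≤ B) ∧
    Filter.Tendsto
      (fun R : ℝ => ⨆ n : ℕ, ∫ ω, (if R ≤ |y n ω| then (k (y n ω)) ^ 2 else 0) ∂ℙ)
      Filter.atTop (nhds 0) := by
  classical
  -- joint law of the two gaussians at index j
  have hpairmeas : ∀ j : ℕ, Measurable (fun ω => (g (j,false) ω, g (j,true) ω)) :=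
    fun j => (hgmeas _).prodMk (hgmeas _)
  have hγ2 : ∀ j : ℕ, Measure.map (fun ω => (g (j,false) ω, g (j,true) ω)) ℙ
      = (gaussianReal 0 1).prod (gaussianReal 0 1) := by
    intro j
    have hne : ((j,false) : ℕ × Bool) ≠ (j,true) := by simp
    have h := hindep.indepFun hne
    rw [indepFun_iff_map_prod_eq_prod_map_map (hgmeas _).aemeasurable
      (hgmeas _).aemeasurable] at h
    rw [h, hlaw, hlaw]
  -- single-factor exponential moments
  have hXint : ∀ (j : ℕ) (s : ℝ), s^2 < 1 →
      Integrable (fun ω => Real.exp (s * (g (j,false) ω * g (j,true) ω))) ℙ := by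
    intro j s hs
    have h := stmt18_prod_integrable hs
    rw [← hγ2 j] at h
    exact (integrable_map_measure stmt18_prod_meas.aestronglyMeasurable
      (hpairmeas j).aemeasurable).mp h
  have hXval : ∀ (j : ℕ) (s : ℝ), s^2 < 1 →
      (∫ ω, Real.exp (s * (g (j,false) ω * g (j,true) ω)) ∂ℙ)
        = (Real.sqrt (1 - s^2))⁻¹ := by
    intro j s hs
    have h := stmt18_prod_integral (s := s) hs
    rw [← hγ2 j, integral_map (hpairmeas j).aemeasurable
      stmt18_prod_meas.aestronglyMeasurable] at h
    exact h
  -- independence of the partial sum from the next factor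
  have hstep : ∀ n : ℕ, IndepFun (fun ω => ∑ j ∈ range n, g (j, false) ω * g (j, true) ω)
      (fun ω => g (n, false) ω * g (n, true) ω) ℙ := by
    intro n
    set S : Finset (ℕ × Bool) := (range n) ×ˢ Finset.univ with hS
    set T : Finset (ℕ × Bool) := {(n, false), (n, true)} with hT
    have hST : Disjoint S T := by
      rw [Finset.disjoint_left]
      rintro ⟨j, b⟩ hjS hjT
      rw [hS, Finset.mem_product, Finset.mem_range] at hjS
      rw [hT] at hjT
      simp only [Finset.mem_insert, Finset.mem_singleton, Prod.mk.injEq] at hjT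
      rcases hjT with ⟨h1, _⟩ | ⟨h1, _⟩ <;> omega
    have h1 := hindep.indepFun_finset S T hST hgmeas
    have hmemS : ∀ (j : ℕ) (b : Bool), j ∈ range n → ((j, b) : ℕ × Bool) ∈ S := by
      intro j b hj
      rw [hS, Finset.mem_product]
      exact ⟨hj, Finset.mem_univ _⟩
    let φS : ((i : S) → ℝ) → ℝ := fun v => ∑ j ∈ (range n).attach,
        v ⟨(j.1, false), hmemS j.1 false j.2⟩ * v ⟨(j.1, true), hmemS j.1 true j.2⟩
    let φT : ((i : T) → ℝ) → ℝ := fun v =>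
        v ⟨(n, false), by rw [hT]; simp⟩ * v ⟨(n, true), by rw [hT]; simp⟩
    have hφS : Measurable φS :=
      Finset.measurable_sum _ (fun j _ => (measurable_pi_apply _).mul (measurable_pi_apply _))
    have hφT : Measurable φT := (measurable_pi_apply _).mul (measurable_pi_apply _)
    have h2 := h1.comp hφS hφT
    have e1 : (φS ∘ fun a (i : S) => g i a)
        = fun ω => ∑ j ∈ range n, g (j, false) ω * g (j, true) ω := by
      funext ω
      exact Finset.sum_attach (range n) (fun j => g (j, false) ω * g (j, true) ω)
    have e2 : (φT ∘ fun a (i : T) => g i a)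
        = fun ω => g (n, false) ω * g (n, true) ω := rfl
    rwa [e1, e2] at h2
  -- exponential moments of scaled sums
  have hsum : ∀ (s : ℝ), s^2 < 1 → ∀ n : ℕ,
      Integrable (fun ω => Real.exp (s * ∑ j ∈ range n, g (j,false) ω * g (j,true) ω)) ℙ ∧
      (∫ ω, Real.exp (s * ∑ j ∈ range n, g (j,false) ω * g (j,true) ω) ∂ℙ)
        = ((Real.sqrt (1 - s^2))⁻¹)^n := by
    intro s hs n
    induction n with
    | zero =>
      constructor
      · simpa using integrable_const (1:ℝ)
      · simp
    | succ m ih =>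
      have hsplit : (fun ω => Real.exp (s * ∑ j ∈ range (m+1), g (j,false) ω * g (j,true) ω))
          = fun ω => Real.exp (s * ∑ j ∈ range m, g (j,false) ω * g (j,true) ω)
              * Real.exp (s * (g (m,false) ω * g (m,true) ω)) := by
        funext ω
        rw [Finset.sum_range_succ, mul_add, Real.exp_add]
      have hφ : Measurable (fun r : ℝ => Real.exp (s * r)) := (measurable_id.const_mul s).exp
      have hind := (hstep m).comp hφ hφ
      constructor
      · rw [hsplit]
        exact hind.integrable_mul ih.1 (hXint m s hs)
      · rw [hsplit]
        have h3 : (∫ ω, Real.exp (s * ∑ j ∈ range m, g (j,false) ω * g (j,true) ω)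
              * Real.exp (s * (g (m,false) ω * g (m,true) ω)) ∂ℙ)
            = (∫ ω, Real.exp (s * ∑ j ∈ range m, g (j,false) ω * g (j,true) ω) ∂ℙ)
              * ∫ ω, Real.exp (s * (g (m,false) ω * g (m,true) ω)) ∂ℙ :=
          hind.integral_mul_eq_mul_integral ih.1.aestronglyMeasurable (hXint m s hs).aestronglyMeasurable
        rw [h3, ih.2, hXval m s hs]
        ring
  have hymeas : ∀ n : ℕ, Measurable (y n) := by
    intro n
    have h : y n = fun ω => (n : ℝ) ^ (-(1:ℝ)/2)
        * ∑ j ∈ range n, g (j, false) ω * g (j, true) ω := by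
      funext ω; exact hy n ω
    rw [h]
    exact (Finset.measurable_sum _ (fun j _ => (hgmeas _).mul (hgmeas _))).const_mul _
  -- moments of y n
  have hs2 : ∀ (n : ℕ) (t : ℝ), 0 < n → (t * (n:ℝ) ^ (-(1:ℝ)/2))^2 = t^2 / n := by
    intro n t hn
    have hn' : (0:ℝ) < n := by exact_mod_cast hn
    rw [mul_pow]
    have h1 : ((n:ℝ) ^ (-(1:ℝ)/2))^(2:ℕ) = (n:ℝ) ^ (-(1:ℝ)) := by
      rw [← Real.rpow_natCast ((n:ℝ) ^ (-(1:ℝ)/2)) 2, ← Real.rpow_mul hn'.le]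
      norm_num
    rw [h1, Real.rpow_neg_one]
    ring
  have hEy : ∀ (n : ℕ) (t : ℝ), 0 < n → t^2 < n →
      Integrable (fun ω => Real.exp (t * y n ω)) ℙ ∧
      (∫ ω, Real.exp (t * y n ω) ∂ℙ) = ((Real.sqrt (1 - t^2/n))⁻¹)^n := by
    intro n t hn ht
    have hn' : (0:ℝ) < n := by exact_mod_cast hn
    set s := t * (n:ℝ) ^ (-(1:ℝ)/2) with hsdef
    have hs2' : s^2 = t^2 / n := hs2 n t hn
    have hs1 : s^2 < 1 := by
      rw [hs2']
      exact (div_lt_one hn').2 ht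
    have hrw : (fun ω => Real.exp (t * y n ω))
        = fun ω => Real.exp (s * ∑ j ∈ range n, g (j,false) ω * g (j,true) ω) := by
      funext ω
      rw [hy n ω, hsdef]
      ring_nf
    constructor
    · rw [hrw]; exact (hsum s hs1 n).1
    · rw [hrw, (hsum s hs1 n).2, hs2']
  -- absolute exponential moments
  set a := 16 * β ^ 2 with hadef
  have ha : 0 < a := by positivity
  have habs : ∀ n : ℕ, a < n →
      Integrable (fun ω => Real.exp (4 * β * |y n ω|)) ℙ ∧
      (∫ ω, Real.exp (4 * β * |y n ω|) ∂ℙ) ≤ 2 * stmt18f a n := by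
    intro n hn
    have hn0 : 0 < n := by
      by_contra h
      push_neg at h
      interval_cases n
      · simp at hn; linarith
    have ht2p : (4*β)^2 = a := by rw [hadef]; ring
    have ht2m : (-(4*β))^2 = a := by rw [hadef]; ring
    have htn : (4*β)^2 < n := by rw [ht2p]; exact hn
    have htm : (-(4*β))^2 < n := by rw [ht2m]; exact hn
    have hplus := hEy n (4*β) hn0 htn
    have hminus := hEy n (-(4*β)) hn0 htm
    have hpoint : ∀ ω, Real.exp (4 * β * |y n ω|)
        ≤ Real.exp ((4*β) * y n ω) + Real.exp ((-(4*β)) * y n ω) := by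
      intro ω
      rcases abs_cases (y n ω) with ⟨h1, _⟩ | ⟨h1, _⟩
      · rw [h1]
        exact le_add_of_nonneg_right (Real.exp_pos _).le
      · rw [h1]
        have : 4 * β * -(y n ω) = (-(4*β)) * y n ω := by ring
        rw [this]
        exact le_add_of_nonneg_left (Real.exp_pos _).le
    have hmeasexp : Measurable (fun ω => Real.exp (4 * β * |y n ω|)) :=
      (((hymeas n).abs).const_mul _).exp
    have hint : Integrable (fun ω => Real.exp (4 * β * |y n ω|)) ℙ := by
      refine (hplus.1.add hminus.1).mono' hmeasexp.aestronglyMeasurable ?_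
      refine Filter.Eventually.of_forall fun ω => ?_
      rw [Real.norm_eq_abs, abs_of_pos (Real.exp_pos _)]
      exact hpoint ω
    refine ⟨hint, ?_⟩
    calc (∫ ω, Real.exp (4 * β * |y n ω|) ∂ℙ)
        ≤ ∫ ω, (Real.exp ((4*β) * y n ω) + Real.exp ((-(4*β)) * y n ω)) ∂ℙ :=
          integral_mono hint (hplus.1.add hminus.1) hpoint
    _ = ((Real.sqrt (1 - (4*β)^2/n))⁻¹)^n + ((Real.sqrt (1 - (-(4*β))^2/n))⁻¹)^n := by
          rw [integral_add hplus.1 hminus.1, hplus.2, hminus.2]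
    _ = 2 * stmt18f a n := by
          rw [ht2p, ht2m, stmt18f]
          ring
  -- the uniform bound
  set n₀ := Nat.floor a + 1 with hn0def
  have han₀ : a < n₀ := by
    have h := Nat.lt_floor_add_one a
    rw [hn0def]
    push_cast
    exact h
  have hle_n₀ : ∀ n : ℕ, a < n → n₀ ≤ n := by
    intro n hn
    rw [hn0def]
    have : Nat.floor a < n := (Nat.floor_lt ha.le).2 hn
    omega
  have hB : ∀ n : ℕ, a < (n:ℝ) →
      (∫ ω, Real.exp (4 * β * |y n ω|) ∂ℙ) ≤ 2 * stmt18f a n₀ := by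
    intro n hn
    refine le_trans (habs n hn).2 ?_
    have := stmt18f_anti a ha n₀ han₀ n (hle_n₀ n hn)
    linarith
  refine ⟨⟨2 * stmt18f a n₀, fun n hn => hB n (by rw [hadef]; exact_mod_cast hn)⟩, ?_⟩
  -- Part 2
  have hf2 : ∀ (n : ℕ) (R : ℝ),
      0 ≤ ∫ ω, (if R ≤ |y n ω| then (k (y n ω))^2 else 0) ∂ℙ := by
    intro n R
    apply integral_nonneg
    intro ω
    dsimp only
    split_ifs <;> positivity
  have hmeasInd : ∀ (n : ℕ) (R : ℝ),
      Measurable (fun ω => if R ≤ |y n ω| then (k (y n ω))^2 else 0) := by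
    intro n R
    have hset : MeasurableSet {ω | R ≤ |y n ω|} :=
      measurableSet_le measurable_const (hymeas n).abs
    exact Measurable.ite hset ((hk.comp (hymeas n)).pow_const 2) measurable_const
  have htail : ∀ (n : ℕ), a < n → ∀ R : ℝ,
      (∫ ω, (if R ≤ |y n ω| then (k (y n ω))^2 else 0) ∂ℙ)
        ≤ C^2 * Real.exp (-2*β*R) * (2 * stmt18f a n₀) := by
    intro n hn R
    have hInt := (habs n hn).1
    have hIntval := hB n hn
    have hpoint : ∀ ω, (if R ≤ |y n ω| then (k (y n ω))^2 else 0)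
        ≤ C^2 * Real.exp (-2*β*R) * Real.exp (4*β*|y n ω|) := by
      intro ω
      split_ifs with h
      · have h1 : (k (y n ω))^2 ≤ C^2 * Real.exp (2*β*|y n ω|) := by
          have hb := hbound (y n ω)
          have h2 : (k (y n ω))^2 ≤ (C * Real.exp (β*|y n ω|))^2 := by
            rw [← sq_abs]
            exact pow_le_pow_left₀ (abs_nonneg _) hb 2
          refine le_trans h2 (le_of_eq ?_)
          rw [mul_pow, pow_two (Real.exp _), ← Real.exp_add]
          ring_nf
        have h3 : Real.exp (2*β*|y n ω|)
            ≤ Real.exp (-2*β*R) * Real.exp (4*β*|y n ω|) := by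
          rw [← Real.exp_add]
          apply Real.exp_le_exp.2
          nlinarith [hβ]
        calc (k (y n ω))^2 ≤ C^2 * Real.exp (2*β*|y n ω|) := h1
        _ ≤ C^2 * (Real.exp (-2*β*R) * Real.exp (4*β*|y n ω|)) :=
            mul_le_mul_of_nonneg_left h3 (by positivity)
        _ = C^2 * Real.exp (-2*β*R) * Real.exp (4*β*|y n ω|) := by ring
      · positivity
    have hdom : Integrable (fun ω => C^2 * Real.exp (-2*β*R) * Real.exp (4*β*|y n ω|)) ℙ := by
      have := hInt.const_mul (C^2 * Real.exp (-2*β*R))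
      simpa [mul_assoc] using this
    calc (∫ ω, (if R ≤ |y n ω| then (k (y n ω))^2 else 0) ∂ℙ)
        ≤ ∫ ω, C^2 * Real.exp (-2*β*R) * Real.exp (4*β*|y n ω|) ∂ℙ := by
          refine integral_mono ?_ hdom hpoint
          refine hdom.mono' (hmeasInd n R).aestronglyMeasurable ?_
          refine Filter.Eventually.of_forall fun ω => ?_
          rw [Real.norm_eq_abs, abs_of_nonneg (by split_ifs <;> positivity)]
          exact hpoint ω
    _ = C^2 * Real.exp (-2*β*R) * ∫ ω, Real.exp (4*β*|y n ω|) ∂ℙ := by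
          rw [← integral_const_mul]
    _ ≤ C^2 * Real.exp (-2*β*R) * (2 * stmt18f a n₀) :=
          mul_le_mul_of_nonneg_left hIntval (by positivity)
  -- per-n convergence to 0
  have hper : ∀ n : ℕ, Filter.Tendsto
      (fun R : ℝ => ∫ ω, (if R ≤ |y n ω| then (k (y n ω))^2 else 0) ∂ℙ)
      Filter.atTop (nhds 0) := by
    intro n
    by_cases hcase : ∃ R₀ : ℝ,
        Integrable (fun ω => if R₀ ≤ |y n ω| then (k (y n ω))^2 else 0) ℙ
    · obtain ⟨R₀, hR₀⟩ := hcase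
      have hmain := tendsto_integral_filter_of_dominated_convergence
        (μ := (ℙ : Measure Ω)) (l := Filter.atTop)
        (F := fun (R : ℝ) ω => if R ≤ |y n ω| then (k (y n ω))^2 else 0)
        (f := fun _ => (0:ℝ))
        (fun ω => if R₀ ≤ |y n ω| then (k (y n ω))^2 else 0)
        (Filter.Eventually.of_forall fun R => (hmeasInd n R).aestronglyMeasurable)
        ?_ hR₀ ?_
      · simpa using hmain
      · filter_upwards [Filter.eventually_ge_atTop R₀] with R hR
        refine Filter.Eventually.of_forall fun ω => ?_
        rw [Real.norm_eq_abs, abs_of_nonneg (by split_ifs <;> positivity)]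
        by_cases h1 : R ≤ |y n ω|
        · rw [if_pos h1, if_pos (le_trans hR h1)]
        · rw [if_neg h1]
          split_ifs <;> positivity
      · refine Filter.Eventually.of_forall fun ω => ?_
        refine Filter.Tendsto.congr' ?_ tendsto_const_nhds
        filter_upwards [Filter.eventually_gt_atTop (|y n ω|)] with R hR
        rw [if_neg (not_le.2 hR)]
    · push_neg at hcase
      have h0 : ∀ R : ℝ, (∫ ω, (if R ≤ |y n ω| then (k (y n ω))^2 else 0) ∂ℙ) = 0 :=
        fun R => integral_undef (hcase R)
      simp only [h0]
      exact tendsto_const_nhds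
  -- combine
  set G : ℝ → ℝ := fun R =>
      (∑ m ∈ range n₀, ∫ ω, (if R ≤ |y m ω| then (k (y m ω))^2 else 0) ∂ℙ)
      + C^2 * Real.exp (-2*β*R) * (2 * stmt18f a n₀) with hGdef
  have hGbound : ∀ (R : ℝ) (n : ℕ),
      (∫ ω, (if R ≤ |y n ω| then (k (y n ω))^2 else 0) ∂ℙ) ≤ G R := by
    intro R n
    have hfnn := stmt18f_nonneg a n₀
    rcases lt_or_ge n n₀ with h | h
    · have h1 : (∫ ω, (if R ≤ |y n ω| then (k (y n ω))^2 else 0) ∂ℙ)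
          ≤ ∑ m ∈ range n₀, ∫ ω, (if R ≤ |y m ω| then (k (y m ω))^2 else 0) ∂ℙ :=
        Finset.single_le_sum (fun m _ => hf2 m R) (Finset.mem_range.2 h)
      have h2 : 0 ≤ C^2 * Real.exp (-2*β*R) * (2 * stmt18f a n₀) := by positivity
      simp only [hGdef]
      linarith
    · have hna : a < n := lt_of_lt_of_le han₀ (by exact_mod_cast h)
      have h1 := htail n hna R
      have h2 : 0 ≤ ∑ m ∈ range n₀, ∫ ω, (if R ≤ |y m ω| then (k (y m ω))^2 else 0) ∂ℙ :=
        Finset.sum_nonneg fun m _ => hf2 m R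
      simp only [hGdef]
      linarith
  have hsup_le : ∀ R : ℝ,
      (⨆ n : ℕ, ∫ ω, (if R ≤ |y n ω| then (k (y n ω))^2 else 0) ∂ℙ) ≤ G R :=
    fun R => ciSup_le (hGbound R)
  have hsup_nonneg : ∀ R : ℝ,
      0 ≤ ⨆ n : ℕ, ∫ ω, (if R ≤ |y n ω| then (k (y n ω))^2 else 0) ∂ℙ := by
    intro R
    have hbdd : BddAbove (Set.range fun n : ℕ =>
        ∫ ω, (if R ≤ |y n ω| then (k (y n ω))^2 else 0) ∂ℙ) := by
      refine ⟨G R, ?_⟩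
      rintro x ⟨n, rfl⟩
      exact hGbound R n
    exact le_trans (hf2 0 R) (le_ciSup hbdd 0)
  have hGtend : Filter.Tendsto G Filter.atTop (nhds 0) := by
    have h1 : Filter.Tendsto (fun R : ℝ =>
        ∑ m ∈ range n₀, ∫ ω, (if R ≤ |y m ω| then (k (y m ω))^2 else 0) ∂ℙ)
        Filter.atTop (nhds 0) := by
      have h := tendsto_finset_sum (range n₀)
        (fun m (_ : m ∈ range n₀) => hper m)
      simpa using h
    have hexp : Filter.Tendsto (fun R : ℝ => Real.exp (-2*β*R)) Filter.atTop (nhds 0) := by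
      rw [Real.tendsto_exp_comp_nhds_zero]
      have hmul : Filter.Tendsto (fun R : ℝ => 2*β*R) Filter.atTop Filter.atTop :=
        Filter.Tendsto.const_mul_atTop (by positivity) Filter.tendsto_id
      have hneg := Filter.tendsto_neg_atTop_atBot.comp hmul
      exact hneg.congr (fun R => by simp only [Function.comp_apply]; ring)
    have h2 : Filter.Tendsto (fun R : ℝ =>
        C^2 * Real.exp (-2*β*R) * (2 * stmt18f a n₀)) Filter.atTop (nhds 0) := by
      have h := (hexp.const_mul (C^2)).mul_const (2 * stmt18f a n₀)
      simpa [mul_assoc] using h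
    have hfinal : Filter.Tendsto (fun R : ℝ =>
        (∑ m ∈ range n₀, ∫ ω, (if R ≤ |y m ω| then (k (y m ω))^2 else 0) ∂ℙ)
        + C^2 * Real.exp (-2*β*R) * (2 * stmt18f a n₀)) Filter.atTop (nhds 0) := by
      have h := h1.add h2
      simpa using h
    rw [hGdef]
    exact hfinal
  exact squeeze_zero hsup_nonneg hsup_le hGtend
end
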